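/- arXiv:1203.3222 — 11 statements merged into one kernel-verified Lean document; each statement's English description precedes it below -/
import Mathlib

section
/- If f : ℝ → ℝ satisfies Δ_h^{n+1} f(x) = 0 for all x, h ∈ ℝ (where Δ_h f(x) = f(x+h) - f(x)), then for every x₀, h₀ ∈ ℝ there exists a polynomial p of degree ≤ n such that f(x₀ + r·h₀) = p(x₀ + r·h₀) for all rational r. -/
noncomputable def fdiff (h : ℝ) (f : ℝ → ℝ) : ℝ → ℝ := fun x => f (x + h) - f x

def IsMonomial (n : ℕ) (f : ℝ → ℝ) : Prop :=
  ∀ x h : ℝ, (1 / (n.factorial : ℝ)) * ((fdiff h)^[n] f) x = f h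

open Finset Polynomial

lemma fdiff_eq : fdiff = fwdDiff (M := ℝ) (G := ℝ) := rfl

lemma iter_zero (h : ℝ) (m : ℕ) : (fdiff h)^[m] (fun _ => (0:ℝ)) = fun _ => 0 := by
  apply Function.iterate_fixed
  funext x; simp [fdiff]

lemma newton_sum {n : ℕ} {f : ℝ → ℝ}
    (hf : ∀ x h : ℝ, ((fdiff h)^[n + 1] f) x = 0) (h y : ℝ) (k : ℕ) :
    f (y + k * h) = ∑ j ∈ range (n+1), (k.choose j : ℝ) * (fdiff h)^[j] f y := by
  have base := shift_eq_sum_fwdDiff_iter h f k y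
  rw [← fdiff_eq] at base
  simp only [nsmul_eq_mul, smul_eq_mul] at base
  rw [base]
  rcases le_total k n with hk | hk
  · refine Finset.sum_subset (by simp [Nat.succ_le_succ hk]) ?_
    intro j hj hj'
    simp only [mem_range, not_lt] at hj hj'
    rw [Nat.choose_eq_zero_of_lt (by omega)]
    simp
  · refine (Finset.sum_subset (by simp [Nat.succ_le_succ hk]) ?_).symm
    intro j hj hj'
    simp only [mem_range, not_lt] at hj hj'
    obtain ⟨m, rfl⟩ : ∃ m, j = m + (n+1) := ⟨j - (n+1), by omega⟩
    rw [Function.iterate_add_apply]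
    have : (fdiff h)^[n+1] f = fun _ => (0:ℝ) := funext fun x => hf x h
    rw [this, iter_zero]
    simp

noncomputable def newtonPoly (f : ℝ → ℝ) (n : ℕ) (y h : ℝ) : Polynomial ℝ :=
  ∑ j ∈ range (n+1), C ((fdiff h)^[j] f y / j.factorial) *
    (descPochhammer ℝ j).comp (C h⁻¹ * (X - C y))

lemma newtonPoly_degree (f : ℝ → ℝ) (n : ℕ) (y h : ℝ) :
    (newtonPoly f n y h).degree ≤ n := by
  refine (Polynomial.degree_sum_le _ _).trans ?_
  refine Finset.sup_le fun j hj => ?_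
  simp only [mem_range] at hj
  refine (degree_mul_le _ _).trans ?_
  have h1 : (C ((fdiff h)^[j] f y / j.factorial)).degree ≤ 0 := degree_C_le
  have h2 : ((descPochhammer ℝ j).comp (C h⁻¹ * (X - C y))).degree ≤ (j : WithBot ℕ) := by
    refine (degree_le_natDegree).trans ?_
    have hle := Polynomial.natDegree_comp_le (p := descPochhammer ℝ j) (q := C h⁻¹ * (X - C y))
    have hd : (descPochhammer ℝ j).natDegree = j := descPochhammer_natDegree ℝ j
    have hq : (C h⁻¹ * (X - C y)).natDegree ≤ 1 := by
      refine (natDegree_mul_le).trans ?_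
      simp [natDegree_X_sub_C]
    have : ((descPochhammer ℝ j).comp (C h⁻¹ * (X - C y))).natDegree ≤ j := by
      calc _ ≤ (descPochhammer ℝ j).natDegree * (C h⁻¹ * (X - C y)).natDegree := hle
        _ ≤ j * 1 := by rw [hd]; exact Nat.mul_le_mul_left _ hq
        _ = j := Nat.mul_one j
    exact_mod_cast this
  calc (C ((fdiff h)^[j] f y / j.factorial)).degree +
      ((descPochhammer ℝ j).comp (C h⁻¹ * (X - C y))).degree ≤ 0 + (j : WithBot ℕ) :=
        add_le_add h1 h2
    _ ≤ (n : WithBot ℕ) := by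
        rw [zero_add]; exact_mod_cast Nat.le_of_lt_succ hj

lemma newtonPoly_eval {f : ℝ → ℝ} {n : ℕ} {y h : ℝ} (hh : h ≠ 0)
    (hf : ∀ x h : ℝ, ((fdiff h)^[n + 1] f) x = 0) (k : ℕ) :
    (newtonPoly f n y h).eval (y + k * h) = f (y + k * h) := by
  rw [newton_sum hf h y k, newtonPoly, eval_finset_sum]
  refine Finset.sum_congr rfl fun j _ => ?_
  rw [eval_mul, eval_C, eval_comp]
  have : (C h⁻¹ * (X - C y)).eval (y + k * h) = (k : ℝ) := by
    simp; field_simp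
  rw [this, descPochhammer_eval_eq_descFactorial ℝ k j,
    Nat.descFactorial_eq_factorial_mul_choose]
  have hj : (j.factorial : ℝ) ≠ 0 := Nat.cast_ne_zero.mpr j.factorial_ne_zero
  push_cast
  field_simp

theorem stmt0 (n : ℕ) (f : ℝ → ℝ)
    (hf : ∀ x h : ℝ, ((fdiff h)^[n + 1] f) x = 0) (x₀ h₀ : ℝ) :
    ∃ p : Polynomial ℝ, p.degree ≤ n ∧
      ∀ r : ℚ, f (x₀ + (r : ℝ) * h₀) = p.eval (x₀ + (r : ℝ) * h₀) := by
  by_cases h0 : h₀ = 0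
  · refine ⟨C (f x₀), degree_C_le.trans (by exact_mod_cast Nat.zero_le n), fun r => ?_⟩
    simp [h0]
  · refine ⟨newtonPoly f n x₀ h₀, newtonPoly_degree f n x₀ h₀, fun r => ?_⟩
    set N : ℕ := r.den with hN
    set M : ℕ := r.num.natAbs with hM
    have hNpos : (N : ℝ) > 0 := by exact_mod_cast r.pos
    set h : ℝ := h₀ / N with hh
    have hhne : h ≠ 0 := div_ne_zero h0 (ne_of_gt hNpos)
    set y : ℝ := x₀ - M * h with hy
    -- the two Newton polynomials agree
    have hqp : newtonPoly f n y h = newtonPoly f n x₀ h₀ := by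
      apply Polynomial.eq_of_degrees_lt_of_eval_index_eq (v := fun j : ℕ => x₀ + j * h₀)
        (Finset.range (n+1))
      · intro a ha b hb hab
        simp only at hab
        have h2 : (a:ℝ) = b := mul_right_cancel₀ h0 (add_left_cancel hab)
        exact_mod_cast h2
      · rw [Finset.card_range]
        exact lt_of_le_of_lt (newtonPoly_degree f n y h) (by exact_mod_cast Nat.lt_succ_self n)
      · rw [Finset.card_range]
        exact lt_of_le_of_lt (newtonPoly_degree f n x₀ h₀) (by exact_mod_cast Nat.lt_succ_self n)
      · intro j _
        have e1 : x₀ + (j : ℝ) * h₀ = y + ((M + j * N : ℕ) : ℝ) * h := by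
          rw [hy, hh]; push_cast; field_simp; ring
        have e2 : x₀ + (j : ℝ) * h₀ = x₀ + ((j : ℕ) : ℝ) * h₀ := by norm_num
        rw [e1, newtonPoly_eval hhne hf, ← e1, e2, newtonPoly_eval h0 hf, ← e2]
    rw [← hqp]
    set k : ℕ := (r.num + M).toNat with hk
    have hknn : (0:ℤ) ≤ r.num + M := by
      rw [hM]; omega
    have hkcast : (k : ℝ) = (r.num : ℝ) + M := by
      rw [hk]
      exact_mod_cast congrArg (Int.cast : ℤ → ℝ) (Int.toNat_of_nonneg hknn)
    have e3 : x₀ + (r : ℝ) * h₀ = y + (k : ℝ) * h := by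
      rw [hy, hh, hkcast, Rat.cast_def]
      field_simp
      ring
    rw [e3, newtonPoly_eval hhne hf]
end

section
/- If f : ℝ → ℝ satisfies Δ_h^{n+1} f(x) = 0 for all x, h ∈ ℝ, and p is a polynomial of degree ≤ n with f(x₀ + k h₀) = p(x₀ + k h₀) for k = 0, 1, ..., n, then f(x₀ + (n+1) h₀) = p(x₀ + (n+1) h₀). -/
open Finset Function

lemma fdiff_eq_fwdDiff (h : ℝ) : fdiff h = fwdDiff h := rfl

lemma poly_fdiff_zero : ∀ (n : ℕ) (p : Polynomial ℝ), p.degree ≤ n → ∀ h : ℝ,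
    (fwdDiff h)^[n + 1] (fun x => p.eval x) = 0 := by
  intro n
  induction n with
  | zero =>
    intro p hp h
    have hc := Polynomial.degree_le_zero_iff.mp hp
    funext x
    rw [hc]
    simp [fwdDiff]
  | succ n ih =>
    intro p hp h
    rcases eq_or_ne p 0 with rfl | hp0
    · funext x
      rw [iterate_succ_apply]
      simp only [Polynomial.eval_zero]
      have : fwdDiff h (fun _ : ℝ => (0 : ℝ)) = fun _ => 0 := by
        funext y; simp [fwdDiff]
      rw [this]
      have := ih 0 (by simp) h
      simpa using congrFun this x
    · rw [iterate_succ_apply]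
      have hq : fwdDiff h (fun x => p.eval x)
          = fun x => (p.comp (Polynomial.X + Polynomial.C h) - p).eval x := by
        funext x
        simp [fwdDiff, Polynomial.eval_comp, add_comm]
      rw [hq]
      apply ih
      have hlc : (p.comp (Polynomial.X + Polynomial.C h)).leadingCoeff = p.leadingCoeff := by
        rw [Polynomial.leadingCoeff_comp (by simp)]
        simp
      have hcz : p.comp (Polynomial.X + Polynomial.C h) ≠ 0 := by
        intro hc
        apply hp0
        rw [← Polynomial.leadingCoeff_eq_zero, ← hlc, hc, Polynomial.leadingCoeff_zero]
      have hdc : (p.comp (Polynomial.X + Polynomial.C h)).degree = p.degree := by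
        rw [Polynomial.degree_eq_natDegree hcz, Polynomial.degree_eq_natDegree hp0,
          Polynomial.natDegree_comp]
        simp
      have hdeg : (p.comp (Polynomial.X + Polynomial.C h) - p).degree
          < (p.comp (Polynomial.X + Polynomial.C h)).degree := by
        exact Polynomial.degree_sub_lt hdc hcz hlc
      rw [hdc] at hdeg
      have hlt := lt_of_lt_of_le hdeg hp
      set q := p.comp (Polynomial.X + Polynomial.C h) - p
      rcases eq_or_ne q 0 with hq0 | hq0
      · rw [hq0]; simp
      · rw [← Polynomial.natDegree_le_iff_degree_le]
        have := (Polynomial.natDegree_lt_iff_degree_lt hq0).mpr hlt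
        omega

theorem stmt1 (n : ℕ) (f : ℝ → ℝ)
    (hf : ∀ x h : ℝ, ((fdiff h)^[n + 1] f) x = 0)
    (p : Polynomial ℝ) (hp : p.degree ≤ n) (x₀ h₀ : ℝ)
    (hinterp : ∀ k : ℕ, k ≤ n → f (x₀ + (k : ℝ) * h₀) = p.eval (x₀ + (k : ℝ) * h₀)) :
    f (x₀ + ((n : ℝ) + 1) * h₀) = p.eval (x₀ + ((n : ℝ) + 1) * h₀) := by
  set g : ℝ → ℝ := fun x => f x - p.eval x with hg
  have hgd : (fwdDiff h₀)^[n + 1] g x₀ = 0 := by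
    have h1 : (fwdDiff h₀)^[n + 1] g
        = fun x => (fwdDiff h₀)^[n+1] f x - (fwdDiff h₀)^[n+1] (fun y => p.eval y) x := by
      have := fwdDiff_iter_add h₀ f (fun y => -p.eval y) (n+1)
      have h2 : g = f + (fun y => -p.eval y) := by funext y; simp [hg, sub_eq_add_neg]
      rw [h2, this]
      funext x
      have hneg : (fun y => -p.eval y) = (-1 : ℝ) • (fun y => p.eval y) := by
        funext y; simp
      rw [hneg, fwdDiff_iter_const_smul]
      simp [sub_eq_add_neg]
    rw [h1]
    simp only [← fdiff_eq_fwdDiff, hf, poly_fdiff_zero n p hp h₀]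
    simp [fdiff_eq_fwdDiff, poly_fdiff_zero n p hp h₀]
  rw [fwdDiff_iter_eq_sum_shift, Finset.sum_range_succ] at hgd
  have hzero : ∀ k ∈ range (n+1),
      ((-1 : ℤ) ^ (n + 1 - k) * (n+1).choose k) • g (x₀ + k • h₀) = 0 := by
    intro k hk
    have hk' : k ≤ n := Nat.lt_succ_iff.mp (mem_range.mp hk)
    have : g (x₀ + (k : ℝ) * h₀) = 0 := by simp [hg, hinterp k hk']
    have hsm : (k : ℕ) • h₀ = (k : ℝ) * h₀ := by simp [nsmul_eq_mul]
    rw [hsm, this, smul_zero]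
  rw [Finset.sum_eq_zero hzero, zero_add] at hgd
  simp only [Nat.sub_self, pow_zero, Nat.choose_self, Nat.cast_one, mul_one, one_smul] at hgd
  have hsm : ((n+1) : ℕ) • h₀ = ((n : ℝ) + 1) * h₀ := by push_cast [nsmul_eq_mul]; ring
  rw [hsm] at hgd
  have := sub_eq_zero.mp hgd
  simpa [hg] using sub_eq_zero.mp hgd
end

section
/- If f : ℝ → ℝ is an n-monomial, i.e. (1/n!) Δ_h^n f(x) = f(h) for all x, h ∈ ℝ, then for every h₀ ≠ 0 there exists a constant A (depending only on h₀) such that f(t) = A t^n for all t ∈ h₀·ℚ. -/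
lemma fdiff_sum (a : ℝ) (m : ℕ) : ∀ (g : ℕ → ℝ → ℝ) (k : ℕ) (x : ℝ),
    (fdiff a)^[m] (fun x => ∑ j ∈ Finset.range k, g j x) x
      = ∑ j ∈ Finset.range k, (fdiff a)^[m] (g j) x := by
  induction m with
  | zero => intro g k x; simp
  | succ m ih =>
    intro g k x
    rw [Function.iterate_succ_apply]
    have e : fdiff a (fun x => ∑ j ∈ Finset.range k, g j x)
        = fun x => ∑ j ∈ Finset.range k, fdiff a (g j) x := by
      funext y; simp [fdiff, Finset.sum_sub_distrib]
    rw [e, ih (fun j => fdiff a (g j)) k x]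
    refine Finset.sum_congr rfl fun j _ => ?_
    rw [← Function.iterate_succ_apply]

lemma fdiff_shift (a : ℝ) (m : ℕ) : ∀ (f : ℝ → ℝ) (c x : ℝ),
    (fdiff a)^[m] (fun y => f (y + c)) x = (fdiff a)^[m] f (x + c) := by
  induction m with
  | zero => intro f c x; simp
  | succ m ih =>
    intro f c x
    rw [Function.iterate_succ_apply, Function.iterate_succ_apply]
    have e : fdiff a (fun y => f (y + c)) = fun y => fdiff a f (y + c) := by
      funext y
      simp only [fdiff]
      congr 2
      ring
    rw [e, ih (fdiff a f) c x]

lemma fdiff_nat_mul (h : ℝ) (f : ℝ → ℝ) (k : ℕ) (x : ℝ) :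
    fdiff ((k : ℝ) * h) f x = ∑ j ∈ Finset.range k, fdiff h f (x + (j : ℝ) * h) := by
  induction k with
  | zero => simp [fdiff]
  | succ k ih =>
    rw [Finset.sum_range_succ, ← ih]
    simp only [fdiff]
    push_cast
    have e1 : x + (↑k + 1) * h = x + ↑k * h + h := by ring
    rw [e1]
    ring

lemma fdiff_key (h C : ℝ) : ∀ (n : ℕ) (f : ℝ → ℝ),
    (∀ x, (fdiff h)^[n] f x = C) → ∀ (k : ℕ) (x : ℝ),
    (fdiff ((k : ℝ) * h))^[n] f x = (k : ℝ) ^ n * C := by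
  intro n
  induction n with
  | zero => intro f hyp k x; simpa using hyp x
  | succ n ih =>
    intro f hyp k x
    rw [Function.iterate_succ_apply]
    have hg : ∀ x, (fdiff h)^[n] (fdiff h f) x = C := by
      intro x; rw [← Function.iterate_succ_apply]; exact hyp x
    have e1 : fdiff ((k : ℝ) * h) f
        = fun y => ∑ j ∈ Finset.range k, (fun z => fdiff h f (z + (j : ℝ) * h)) y := by
      funext y; exact fdiff_nat_mul h f k y
    rw [e1, fdiff_sum]
    have e2 : ∀ j ∈ Finset.range k,
        (fdiff ((k : ℝ) * h))^[n] (fun z => fdiff h f (z + (j : ℝ) * h)) x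
          = (k : ℝ) ^ n * C := by
      intro j _
      rw [fdiff_shift]
      exact ih (fdiff h f) hg k (x + (j : ℝ) * h)
    rw [Finset.sum_congr rfl e2, Finset.sum_const, Finset.card_range]
    ring

lemma fdiff_neg (h : ℝ) : ∀ (n : ℕ) (f : ℝ → ℝ) (x : ℝ),
    (fdiff (-h))^[n] f x = (-1 : ℝ) ^ n * (fdiff h)^[n] f (x - (n : ℝ) * h) := by
  intro n
  induction n with
  | zero => intro f x; simp
  | succ n ih =>
    intro f x
    rw [Function.iterate_succ_apply', Function.iterate_succ_apply']
    simp only [fdiff]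
    rw [ih f (x + -h), ih f x]
    have e1 : x + -h - (n : ℝ) * h = x - ((n : ℕ) + 1 : ℝ) * h := by ring
    have e2 : x - (n : ℝ) * h = x - ((n : ℕ) + 1 : ℝ) * h + h := by ring
    rw [e1, e2]
    push_cast
    ring

theorem stmt2 (n : ℕ) (f : ℝ → ℝ) (hf : IsMonomial n f) (h₀ : ℝ) (hh₀ : h₀ ≠ 0) :
    ∃ A : ℝ, ∀ r : ℚ, f (h₀ * (r : ℝ)) = A * (h₀ * (r : ℝ)) ^ n := by
  have hN : ((n.factorial : ℝ)) ≠ 0 := Nat.cast_ne_zero.2 n.factorial_ne_zero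
  have hf' : ∀ x h : ℝ, (fdiff h)^[n] f x = (n.factorial : ℝ) * f h := by
    intro x h
    have := hf x h
    field_simp at this
    linarith [this]
  -- natural homogeneity
  have hnat : ∀ (k : ℕ) (t : ℝ), f ((k : ℝ) * t) = (k : ℝ) ^ n * f t := by
    intro k t
    have h1 := fdiff_key t ((n.factorial : ℝ) * f t) n f (fun x => hf' x t) k 0
    have h2 := hf' 0 ((k : ℝ) * t)
    rw [h1] at h2
    have := mul_left_cancel₀ hN (by linarith [h2] : (n.factorial : ℝ) * f ((k:ℝ)*t)
      = (n.factorial : ℝ) * ((k : ℝ) ^ n * f t))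
    · linarith [this]
  -- negation
  have hneg : ∀ t : ℝ, f (-t) = (-1 : ℝ) ^ n * f t := by
    intro t
    have h1 := fdiff_neg t n f ((n : ℝ) * t)
    rw [hf' ((n : ℝ) * t) (-t)] at h1
    have h2 : (n : ℝ) * t - (n : ℝ) * t = (0 : ℝ) := by ring
    rw [h2, hf' 0 t] at h1
    have := mul_left_cancel₀ hN (by linarith [h1] : (n.factorial : ℝ) * f (-t)
      = (n.factorial : ℝ) * ((-1 : ℝ) ^ n * f t))
    linarith [this]
  -- integer homogeneity
  have hint : ∀ (p : ℤ) (t : ℝ), f ((p : ℝ) * t) = (p : ℝ) ^ n * f t := by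
    intro p t
    obtain ⟨m, rfl | rfl⟩ := p.eq_nat_or_neg
    · push_cast; exact hnat m t
    · push_cast
      have e : -(m : ℝ) * t = -((m : ℝ) * t) := by ring
      rw [e, hneg, hnat m t]
      ring
  refine ⟨f h₀ / h₀ ^ n, fun r => ?_⟩
  set q : ℕ := r.den with hq
  set p : ℤ := r.num with hp
  have hqpos : (0 : ℝ) < (q : ℝ) := by exact_mod_cast r.pos
  have hq0 : (q : ℝ) ≠ 0 := ne_of_gt hqpos
  have e1 : f h₀ = (q : ℝ) ^ n * f (h₀ / q) := by
    have := hnat q (h₀ / q)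
    rw [mul_div_cancel₀ _ hq0] at this
    exact this
  have e2 : h₀ * (r : ℝ) = (p : ℝ) * (h₀ / q) := by
    rw [Rat.cast_def]
    field_simp
    ring
  have e3 : f (h₀ * (r : ℝ)) = (p : ℝ) ^ n * f (h₀ / q) := by
    rw [e2]; exact hint p (h₀ / q)
  rw [e3]
  have e4 : f (h₀ / q) = f h₀ / (q : ℝ) ^ n := by
    rw [e1]; field_simp
  rw [e4, e2]
  rw [mul_pow, div_pow]
  field_simp
end

section
/- Identity principle for monomials: if f, g : ℝ → ℝ are both n-monomials and there is a nonempty open interval I ⊆ ℝ with f(t) = g(t) for all t ∈ I, then f = g on all of ℝ. -/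
lemma fdiff_iter_apply (h : ℝ) (F : ℝ → ℝ) (j : ℕ) (x : ℝ) :
    (fdiff h)^[j+1] F x = (fdiff h)^[j] F (x + h) - (fdiff h)^[j] F x := by
  rw [Function.iterate_succ_apply']
  rfl

lemma fdiff_iter_sub (h : ℝ) (f g : ℝ → ℝ) (j : ℕ) (x : ℝ) :
    (fdiff h)^[j] (fun y => f y - g y) x = (fdiff h)^[j] f x - (fdiff h)^[j] g x := by
  induction j generalizing x with
  | zero => simp
  | succ j ih =>
    rw [fdiff_iter_apply, fdiff_iter_apply, fdiff_iter_apply, ih, ih]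
    ring

lemma fdiff_iter_zero (h : ℝ) (φ : ℝ → ℝ) (j : ℕ) (x : ℝ)
    (hv : ∀ k : ℕ, k ≤ j → φ (x + k * h) = 0) : (fdiff h)^[j] φ x = 0 := by
  induction j generalizing x with
  | zero => simpa using hv 0 le_rfl
  | succ j ih =>
    rw [fdiff_iter_apply]
    rw [ih x (fun k hk => hv k (hk.trans (Nat.le_succ j))),
        ih (x + h) (fun k hk => by
          have h2 : x + h + (k : ℝ) * h = x + ((k + 1 : ℕ) : ℝ) * h := by push_cast; ring
          rw [h2]; exact hv (k + 1) (Nat.succ_le_succ hk))]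
    ring

theorem stmt4 (n : ℕ) (f g : ℝ → ℝ) (hf : IsMonomial n f) (hg : IsMonomial n g)
    (a b : ℝ) (hab : a < b) (heq : ∀ t ∈ Set.Ioo a b, f t = g t) :
    ∀ t : ℝ, f t = g t := by
  intro t
  set φ : ℝ → ℝ := fun y => f y - g y with hφ
  have hba : (0:ℝ) < b - a := by linarith
  set c : ℝ := (a + b) / 2 with hc
  obtain ⟨N, hN⟩ := exists_nat_gt (max 1 (2 * (n + 1) * |t - c| / (b - a)))
  have hN1 : (1:ℝ) < N := lt_of_le_of_lt (le_max_left _ _) hN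
  have hNpos : (0:ℝ) < N := by linarith
  have hNne : (N:ℝ) ≠ 0 := ne_of_gt hNpos
  set h : ℝ := (t - c) / N with hh
  have ht : t = c + (N:ℝ) * h := by rw [hh, mul_div_assoc', mul_div_cancel_left₀ (t - c) hNne]; ring
  have hX : 2 * ((n:ℝ) + 1) * |t - c| < N * (b - a) := by
    have h1 := lt_of_le_of_lt (le_max_right (1:ℝ) _) hN
    rw [div_lt_iff₀ hba] at h1
    linarith
  have habs : |h| = |t - c| / N := by
    rw [hh, abs_div, abs_of_pos hNpos]
  have hsmall : (n:ℝ) * |h| < (b - a) / 2 := by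
    rw [habs, mul_div_assoc', div_lt_div_iff₀ hNpos (by norm_num : (0:ℝ) < 2)]
    have := abs_nonneg (t - c)
    nlinarith
  -- points c + k*h for k ≤ n are in the interval
  have hint : ∀ k : ℕ, k ≤ n → c + (k:ℝ) * h ∈ Set.Ioo a b := by
    intro k hk
    have hk' : |(k:ℝ) * h| < (b - a) / 2 := by
      rw [abs_mul, Nat.abs_cast]
      have h1 : (k:ℝ) ≤ n := Nat.cast_le.mpr hk
      have h2 : (k:ℝ) * |h| ≤ (n:ℝ) * |h| := by
        apply mul_le_mul_of_nonneg_right h1 (abs_nonneg h)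
      linarith
    obtain ⟨h1, h2⟩ := abs_lt.mp hk'
    constructor <;> [skip; skip] <;> simp only [hc] <;> linarith
  -- φ vanishes on the interval
  have hveq : ∀ y ∈ Set.Ioo a b, φ y = 0 := by
    intro y hy; simp [hφ, heq y hy]
  have hfact : (n.factorial : ℝ) ≠ 0 := Nat.cast_ne_zero.mpr n.factorial_ne_zero
  -- the n-th difference of φ with step h is constant in x
  have hconst : ∀ x : ℝ, (fdiff h)^[n] φ x = (n.factorial : ℝ) * (f h - g h) := by
    intro x
    have h1 := hf x h
    have h2 := hg x h
    rw [hφ, fdiff_iter_sub]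
    field_simp at h1 h2
    linarith
  -- it vanishes at c, hence everywhere
  have hzc : (fdiff h)^[n] φ c = 0 :=
    fdiff_iter_zero h φ n c (fun k hk => hveq _ (hint k hk))
  have hzero : ∀ x : ℝ, (fdiff h)^[n] φ x = 0 := by
    intro x; rw [hconst x, ← hconst c, hzc]
  -- lattice induction
  have key : ∀ m : ℕ, ∀ j : ℕ, j ≤ n → (fdiff h)^[j] φ (c + (m:ℝ) * h) = 0 := by
    intro m
    induction m with
    | zero =>
      intro j hj
      simp only [Nat.cast_zero, zero_mul, add_zero]
      exact fdiff_iter_zero h φ j c (fun k hk => hveq _ (hint k (hk.trans hj)))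
    | succ m ih =>
      intro j hj
      rcases eq_or_lt_of_le hj with hjn | hjn
      · subst hjn; exact hzero _
      · have hstep : (fdiff h)^[j] φ (c + (m:ℝ) * h + h) =
            (fdiff h)^[j] φ (c + (m:ℝ) * h) + (fdiff h)^[j+1] φ (c + (m:ℝ) * h) := by
          rw [fdiff_iter_apply]; ring
        have hcast : c + ((m + 1 : ℕ) : ℝ) * h = c + (m:ℝ) * h + h := by push_cast; ring
        rw [hcast, hstep, ih j hj, ih (j+1) hjn]
        ring
  have := key N 0 (Nat.zero_le n)
  simp only [Function.iterate_zero, id_eq] at this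
  rw [← ht] at this
  have : f t - g t = 0 := this
  linarith
end

section
/- If f : ℝ → ℝ is an n-monomial whose graph restricted to an open interval I not containing 0 agrees with t ↦ A t^n on I for some constant A, then f(t) = A t^n for all t ∈ ℝ. -/
lemma fdiff_iter_add (k t : ℝ) (n : ℕ) : ∀ (g : ℝ → ℝ) (x : ℝ),
    (fdiff k)^[n] (fun y => g (y + t)) x = (fdiff k)^[n] g (x + t) := by
  induction n with
  | zero => intro g x; simp
  | succ n ih =>
    intro g x
    rw [Function.iterate_succ_apply, Function.iterate_succ_apply]
    have : fdiff k (fun y => g (y + t)) = fun y => (fdiff k g) (y + t) := by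
      funext y; simp [fdiff]; ring_nf
    rw [this, ih]

lemma fdiff_iter_neg (k : ℝ) (n : ℕ) : ∀ (g : ℝ → ℝ) (x : ℝ),
    (fdiff k)^[n] (fun y => -(g y)) x = -((fdiff k)^[n] g x) := by
  induction n with
  | zero => intro g x; simp
  | succ n ih =>
    intro g x
    rw [Function.iterate_succ_apply, Function.iterate_succ_apply]
    have : fdiff k (fun y => -(g y)) = fun y => -(fdiff k g y) := by
      funext y; simp [fdiff]; ring
    rw [this, ih]

lemma fdiff_iter_sum (k : ℝ) (n : ℕ) : ∀ (m : ℕ) (g : ℕ → ℝ → ℝ) (x : ℝ),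
    (fdiff k)^[n] (fun y => ∑ j ∈ Finset.range m, g j y) x
      = ∑ j ∈ Finset.range m, (fdiff k)^[n] (g j) x := by
  induction n with
  | zero => intro m g x; simp
  | succ n ih =>
    intro m g x
    rw [Function.iterate_succ_apply]
    have : fdiff k (fun y => ∑ j ∈ Finset.range m, g j y)
        = fun y => ∑ j ∈ Finset.range m, (fdiff k (g j)) y := by
      funext y; simp [fdiff, Finset.sum_sub_distrib]
    rw [this, ih]
    exact Finset.sum_congr rfl fun j _ => by rw [Function.iterate_succ_apply]

lemma fdiff_telescope (h : ℝ) (g : ℝ → ℝ) (m : ℕ) :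
    fdiff ((m : ℝ) * h) g = fun y => ∑ j ∈ Finset.range m, fdiff h g (y + j * h) := by
  funext y
  induction m with
  | zero => simp [fdiff]
  | succ m ih =>
    rw [Finset.sum_range_succ, ← ih]
    simp only [fdiff]
    push_cast
    ring_nf

lemma key (n : ℕ) : ∀ (g : ℝ → ℝ) (c h : ℝ), (∀ x, (fdiff h)^[n] g x = c) →
    ∀ (m : ℕ) (x : ℝ), (fdiff ((m : ℝ) * h))^[n] g x = (m : ℝ) ^ n * c := by
  induction n with
  | zero => intro g c h hg m x; simpa using hg x
  | succ n ih =>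
    intro g c h hg m x
    rw [Function.iterate_succ_apply, fdiff_telescope,
      fdiff_iter_sum ((m:ℝ)*h) n m (fun j y => fdiff h g (y + j * h)) x]
    have step : ∀ j : ℕ, (fdiff ((m:ℝ)*h))^[n] (fun y => fdiff h g (y + j * h)) x
        = (m : ℝ) ^ n * c := by
      intro j
      rw [fdiff_iter_add]
      exact ih (fdiff h g) c h (fun y => by
        have := hg y; rwa [Function.iterate_succ_apply] at this) m (x + j * h)
    rw [Finset.sum_congr rfl fun j _ => step j]
    simp [Finset.sum_const]
    ring

lemma fdiff_iter_negadd (k t : ℝ) (n : ℕ) : ∀ (g : ℝ → ℝ) (x : ℝ),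
    (fdiff k)^[n] (fun y => -(g (y + t))) x = -((fdiff k)^[n] g (x + t)) := by
  induction n with
  | zero => intro g x; simp
  | succ n ih =>
    intro g x
    rw [Function.iterate_succ_apply, Function.iterate_succ_apply]
    have : fdiff k (fun y => -(g (y + t))) = fun y => -((fdiff k g) (y + t)) := by
      funext y; simp [fdiff]; ring_nf
    rw [this, ih]

lemma fdiff_neg_iter (h : ℝ) (n : ℕ) : ∀ (g : ℝ → ℝ) (x : ℝ),
    (fdiff (-h))^[n] g x = (-1 : ℝ) ^ n * (fdiff h)^[n] g (x - n * h) := by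
  induction n with
  | zero => intro g x; simp
  | succ n ih =>
    intro g x
    rw [Function.iterate_succ_apply, ih]
    have e0 : fdiff (-h) g = fun y => -((fdiff h g) (y + (-h))) := by
      funext y; simp [fdiff]
    rw [e0, fdiff_iter_negadd, Function.iterate_succ_apply]
    push_cast
    ring_nf

section mono
variable {n : ℕ} {f : ℝ → ℝ} (hf : IsMonomial n f)

lemma mono_const (hf : IsMonomial n f) (h x : ℝ) :
    (fdiff h)^[n] f x = (n.factorial : ℝ) * f h := by
  have hfac : (n.factorial : ℝ) ≠ 0 := by positivity
  have := hf x h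
  field_simp at this
  linarith [this]

lemma mono_scale_nat (hf : IsMonomial n f) (m : ℕ) (h : ℝ) :
    f ((m : ℝ) * h) = (m : ℝ) ^ n * f h := by
  have hfac : (n.factorial : ℝ) ≠ 0 := by positivity
  have h1 := key n f ((n.factorial : ℝ) * f h) h (mono_const hf h) m 0
  have h2 := mono_const hf ((m : ℝ) * h) 0
  rw [h2] at h1
  apply mul_left_cancel₀ hfac
  linear_combination h1

lemma mono_scale_neg (hf : IsMonomial n f) (h : ℝ) :
    f (-h) = (-1 : ℝ) ^ n * f h := by
  have hfac : (n.factorial : ℝ) ≠ 0 := by positivity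
  have h1 := fdiff_neg_iter h n f 0
  rw [mono_const hf h, mono_const hf (-h)] at h1
  apply mul_left_cancel₀ hfac
  linear_combination h1

lemma mono_scale_int (hf : IsMonomial n f) (z : ℤ) (h : ℝ) :
    f ((z : ℝ) * h) = (z : ℝ) ^ n * f h := by
  obtain ⟨m, rfl | rfl⟩ := z.eq_nat_or_neg
  · push_cast; exact mono_scale_nat hf m h
  · have : ((-(m:ℤ) : ℤ) : ℝ) * h = -((m : ℝ) * h) := by push_cast; ring
    rw [this, mono_scale_neg hf, mono_scale_nat hf]
    push_cast; ring

lemma mono_scale_rat (hf : IsMonomial n f) (q : ℚ) (h : ℝ) :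
    f ((q : ℝ) * h) = (q : ℝ) ^ n * f h := by
  have hd : ((q.den : ℝ)) ≠ 0 := by exact_mod_cast q.den_nz -- maybe wrong name
  have hq : (q : ℝ) = (q.num : ℝ) / (q.den : ℝ) := Rat.cast_def q
  have e1 : (q : ℝ) * h = (q.num : ℝ) * (h / q.den) := by rw [hq]; ring
  have e2 : f ((q.num : ℝ) * (h / q.den)) = (q.num : ℝ) ^ n * f (h / q.den) :=
    mono_scale_int hf q.num (h / q.den)
  have e3 : f h = (q.den : ℝ) ^ n * f (h / q.den) := by
    have : ((q.den : ℝ)) * (h / q.den) = h := by field_simp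
    conv_lhs => rw [← this]
    exact_mod_cast mono_scale_int hf (q.den : ℤ) (h / q.den)
  rw [e1, e2, hq, e3]
  field_simp
  have hX : (q.den:ℝ)^n * (q.den:ℝ)⁻¹^n = 1 := by rw [← mul_pow, mul_inv_cancel₀ hd, one_pow]
  linear_combination (-(q.num:ℝ)^n * f (h / (q.den:ℝ))) * hX

end mono

theorem stmt5 (n : ℕ) (f : ℝ → ℝ) (hf : IsMonomial n f) (A a b : ℝ) (hab : a < b)
    (h0 : (0 : ℝ) ∉ Set.Ioo a b) (heq : ∀ t ∈ Set.Ioo a b, f t = A * t ^ n) :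
    ∀ t : ℝ, f t = A * t ^ n := by
  intro t
  suffices hex : ∃ (q : ℚ) (h : ℝ), h ∈ Set.Ioo a b ∧ t = (q : ℝ) * h by
    obtain ⟨q, h, hmem, rfl⟩ := hex
    rw [mono_scale_rat hf, heq h hmem, mul_pow]
    ring
  rcases eq_or_ne t 0 with rfl | ht
  · exact ⟨0, (a + b) / 2, ⟨by linarith, by linarith⟩, by simp⟩
  have hne : ∀ h ∈ Set.Ioo a b, h ≠ (0:ℝ) := fun h hm he => h0 (he ▸ hm)
  rcases ht.lt_or_gt with htneg | htpos
  · -- t < 0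
    have hd : b / t < a / t := by
      exact div_lt_div_of_neg_of_lt htneg hab
    obtain ⟨q, hq1, hq2⟩ := exists_rat_btwn hd
    have hmem : (q : ℝ) * t ∈ Set.Ioo a b :=
      ⟨(lt_div_iff_of_neg htneg).mp hq2, (div_lt_iff_of_neg htneg).mp hq1⟩
    have hq0 : q ≠ 0 := by
      intro h; apply hne _ hmem; rw [h]; simp
    refine ⟨q⁻¹, (q : ℝ) * t, hmem, ?_⟩
    push_cast
    field_simp
  · -- t > 0
    have hd : a / t < b / t := by gcongr
    obtain ⟨q, hq1, hq2⟩ := exists_rat_btwn hd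
    have hmem : (q : ℝ) * t ∈ Set.Ioo a b :=
      ⟨(div_lt_iff₀ htpos).mp hq1, (lt_div_iff₀ htpos).mp hq2⟩
    have hq0 : q ≠ 0 := by
      intro h; apply hne _ hmem; rw [h]; simp
    refine ⟨q⁻¹, (q : ℝ) * t, hmem, ?_⟩
    push_cast
    field_simp
end

section
/- If f : ℝ → ℝ is a discontinuous n-monomial, then sup_{h ≠ 0} |f(h)/h^n| = +∞; in particular f is unbounded on [1,2]. -/
namespace MonoAux


lemma iter_inner (h : ℝ) (G : ℝ → ℝ) (n : ℕ) :
    (fdiff h)^[n+1] G = (fdiff h)^[n] (fdiff h G) := Function.iterate_succ_apply _ _ _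

lemma iter_outer (h : ℝ) (G : ℝ → ℝ) (n : ℕ) :
    (fdiff h)^[n+1] G = fdiff h ((fdiff h)^[n] G) := Function.iterate_succ_apply' _ _ _

lemma iter_add (h : ℝ) (n : ℕ) : ∀ (F G : ℝ → ℝ),
    (fdiff h)^[n] (fun x => F x + G x) = fun z => (fdiff h)^[n] F z + (fdiff h)^[n] G z := by
  induction n with
  | zero => intro F G; rfl
  | succ n ih =>
    intro F G
    rw [iter_inner, iter_inner, iter_inner]
    have e : fdiff h (fun x => F x + G x) = fun x => fdiff h F x + fdiff h G x := by
      funext x; simp [fdiff]; ring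
    rw [e, ih]

lemma iter_cmul (h : ℝ) (n : ℕ) : ∀ (c : ℝ) (F : ℝ → ℝ),
    (fdiff h)^[n] (fun x => c * F x) = fun z => c * (fdiff h)^[n] F z := by
  induction n with
  | zero => intro c F; rfl
  | succ n ih =>
    intro c F
    rw [iter_inner, iter_inner]
    have e : fdiff h (fun x => c * F x) = fun x => c * fdiff h F x := by
      funext x; simp [fdiff]; ring
    rw [e, ih]

lemma iter_trans (h : ℝ) (n : ℕ) : ∀ (c : ℝ) (F : ℝ → ℝ),
    (fdiff h)^[n] (fun x => F (x + c)) = fun z => (fdiff h)^[n] F (z + c) := by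
  induction n with
  | zero => intro c F; rfl
  | succ n ih =>
    intro c F
    rw [iter_inner, iter_inner]
    have e : fdiff h (fun x => F (x + c)) = fun x => (fdiff h F) (x + c) := by
      funext x; simp only [fdiff, add_right_comm]
    rw [e, ih]

lemma iter_zero (h : ℝ) (n : ℕ) : (fdiff h)^[n] (fun _ => (0:ℝ)) = fun _ => (0:ℝ) := by
  induction n with
  | zero => rfl
  | succ n ih =>
    rw [iter_inner]
    have e : fdiff h (fun _ => (0:ℝ)) = fun _ => (0:ℝ) := by funext x; simp [fdiff]
    rw [e, ih]

lemma iter_sum (h : ℝ) (n : ℕ) (F : ℕ → ℝ → ℝ) : ∀ (m : ℕ),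
    (fdiff h)^[n] (fun x => ∑ i ∈ Finset.range m, F i x)
      = fun z => ∑ i ∈ Finset.range m, (fdiff h)^[n] (F i) z := by
  intro m
  induction m with
  | zero => simpa using iter_zero h n
  | succ m ih =>
    have e : (fun x => ∑ i ∈ Finset.range (m+1), F i x)
        = fun x => (∑ i ∈ Finset.range m, F i x) + F m x := by
      funext x; rw [Finset.sum_range_succ]
    rw [e, iter_add, ih]
    funext z; rw [Finset.sum_range_succ]

lemma fdiff_nat_mul (h : ℝ) (G : ℝ → ℝ) : ∀ (m : ℕ) (z : ℝ),
    fdiff ((m:ℝ) * h) G z = ∑ i ∈ Finset.range m, fdiff h G (z + i * h) := by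
  intro m
  induction m with
  | zero => intro z; simp [fdiff]
  | succ m ih =>
    intro z
    rw [Finset.sum_range_succ, ← ih]
    simp only [fdiff]
    push_cast
    ring_nf


lemma iter_step_mul (h : ℝ) (G : ℝ → ℝ) (j m : ℕ) :
    (fdiff h)^[j] (fdiff ((m:ℝ) * h) G)
      = fun x => ∑ i ∈ Finset.range m, (fdiff h)^[j+1] G (x + i * h) := by
  have h1 : fdiff ((m:ℝ) * h) G = fun z => ∑ i ∈ Finset.range m, fdiff h G (z + i * h) := by
    funext z; exact fdiff_nat_mul h G m z
  rw [h1, iter_sum]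
  funext x
  refine Finset.sum_congr rfl fun i _ => ?_
  rw [iter_trans, iter_inner]

lemma iter_const (h : ℝ) (j : ℕ) : ∀ (G : ℝ → ℝ) (c : ℝ),
    (∀ x, (fdiff h)^[j] G x = c) → ∀ (m : ℕ) (z : ℝ),
      (fdiff ((m:ℝ) * h))^[j] G z = (m:ℝ)^j * c := by
  induction j with
  | zero => intro G c hc m z; simpa using hc z
  | succ j ih =>
    intro G c hc m z
    rw [iter_inner]
    have hc' : ∀ x, (fdiff h)^[j] (fdiff ((m:ℝ) * h) G) x = (m:ℝ) * c := by
      intro x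
      rw [iter_step_mul]
      have e2 : ∀ i ∈ Finset.range m, (fdiff h)^[j+1] G (x + i * h) = c := fun i _ => hc _
      simp only []
      rw [Finset.sum_congr rfl e2, Finset.sum_const, Finset.card_range, nsmul_eq_mul]
    rw [ih _ _ hc' m z]
    ring

lemma iter_mixed (h : ℝ) (j : ℕ) : ∀ (G : ℝ → ℝ),
    (∀ x, (fdiff h)^[j+1] G x = 0) → ∀ (b : ℕ) (x : ℝ),
      fdiff h ((fdiff ((b:ℝ) * h))^[j] G) x = 0 := by
  induction j with
  | zero => intro G h0 b x; exact h0 x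
  | succ j ih =>
    intro G h0 b x
    rw [iter_inner]
    refine ih (fdiff ((b:ℝ) * h) G) ?_ b x
    intro y
    rw [iter_step_mul]
    refine Finset.sum_eq_zero fun i _ => h0 _

lemma iter_mixed' (h : ℝ) (j a b : ℕ) (G : ℝ → ℝ)
    (h0 : ∀ x, (fdiff h)^[j+1] G x = 0) (x : ℝ) :
    fdiff ((a:ℝ) * h) ((fdiff ((b:ℝ) * h))^[j] G) x = 0 := by
  rw [fdiff_nat_mul]
  exact Finset.sum_eq_zero fun i _ => iter_mixed h j G h0 b _

lemma iter_dilate (j : ℕ) : ∀ (G : ℝ → ℝ) (a h z : ℝ),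
    (fdiff h)^[j] (fun x => G (a * x)) z = (fdiff (a * h))^[j] G (a * z) := by
  induction j with
  | zero => intro G a h z; rfl
  | succ j ih =>
    intro G a h z
    rw [iter_inner, iter_inner]
    have e : fdiff h (fun x => G (a * x)) = fun x => (fdiff (a * h) G) (a * x) := by
      funext x; simp only [fdiff]; ring_nf
    rw [e, ih]

lemma iter_neg_step (j : ℕ) : ∀ (G : ℝ → ℝ) (h z : ℝ),
    (fdiff (-h))^[j] G z = (-1)^j * (fdiff h)^[j] G (z - j * h) := by
  induction j with
  | zero => intro G h z; simp
  | succ j ih =>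
    intro G h z
    rw [iter_inner, ih]
    have e : fdiff (-h) G = fun x => (-1) * ((fdiff h G) (x + (-h))) := by
      funext x; simp only [fdiff]; ring_nf
    rw [e, iter_cmul]
    have := iter_trans h j (-h) (fdiff h G)
    rw [this]
    rw [← iter_inner]
    push_cast
    ring_nf

lemma iter_bound (n j : ℕ) (K q : ℝ) (G : ℝ → ℝ)
    (hK : ∀ x, |G x| ≤ K * (1 + |x|)^n) :
    ∀ w, |(fdiff q)^[j] G w| ≤ 2^j * K * (1 + |w| + j * |q|)^n := by
  have hK0 : 0 ≤ K := by
    have := hK 0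
    simpa using (abs_nonneg (G 0)).trans this
  induction j with
  | zero => intro w; simpa using hK w
  | succ j ih =>
    intro w
    rw [iter_outer]
    have h1 : |fdiff q ((fdiff q)^[j] G) w|
        ≤ |(fdiff q)^[j] G (w + q)| + |(fdiff q)^[j] G w| := by
      simp only [fdiff]; exact abs_sub _ _
    have h2 := ih (w + q)
    have h3 := ih w
    have key1 : (1 + |w + q| + j * |q|)^n ≤ (1 + |w| + (j+1) * |q|)^n := by
      apply pow_le_pow_left₀ (by positivity)
      have := abs_add_le w q
      push_cast; nlinarith [abs_nonneg q]
    have key2 : (1 + |w| + j * |q|)^n ≤ (1 + |w| + (j+1) * |q|)^n := by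
      apply pow_le_pow_left₀ (by positivity)
      push_cast; nlinarith [abs_nonneg q]
    have h2j : (0:ℝ) ≤ 2^j * K := by positivity
    calc |fdiff q ((fdiff q)^[j] G) w|
        ≤ |(fdiff q)^[j] G (w + q)| + |(fdiff q)^[j] G w| := h1
      _ ≤ 2^j * K * (1 + |w + q| + j * |q|)^n + 2^j * K * (1 + |w| + j * |q|)^n := by
          exact add_le_add h2 h3
      _ ≤ 2^j * K * (1 + |w| + (j+1) * |q|)^n + 2^j * K * (1 + |w| + (j+1) * |q|)^n := by
          exact add_le_add (by nlinarith) (by nlinarith)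
      _ = 2^(j+1) * K * (1 + |w| + ((j:ℕ)+1 : ℝ) * |q|)^n := by ring
      _ = 2^(j+1) * K * (1 + |w| + ((j+1 : ℕ) : ℝ) * |q|)^n := by push_cast; ring

lemma iter_periodic_mul (j : ℕ) : ∀ (G : ℝ → ℝ) (q : ℚ),
    (∀ c : ℚ, 0 < c → ∀ x : ℝ, (fdiff (q:ℝ))^[j] G (x + c) = (fdiff (q:ℝ))^[j] G x) →
    0 < q → ∀ (m : ℕ) (z : ℝ),
      (fdiff ((m:ℝ) * q))^[j] G z = (m:ℝ)^j * (fdiff (q:ℝ))^[j] G z := by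
  induction j with
  | zero => intro G q _ _ m z; simp
  | succ j ih =>
    intro G q per hq m z
    have hexp : ∀ x : ℝ, (fdiff (q:ℝ))^[j] (fdiff ((m:ℝ) * q) G) x
        = ∑ i ∈ Finset.range m, (fdiff (q:ℝ))^[j+1] G (x + i * q) := by
      intro x; rw [iter_step_mul]
    have per' : ∀ c : ℚ, 0 < c → ∀ x : ℝ,
        (fdiff (q:ℝ))^[j] (fdiff ((m:ℝ) * q) G) (x + c)
          = (fdiff (q:ℝ))^[j] (fdiff ((m:ℝ) * q) G) x := by
      intro c hc x
      rw [hexp, hexp]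
      refine Finset.sum_congr rfl fun i _ => ?_
      have : (x + (c:ℝ)) + (i:ℝ) * q = (x + (i:ℝ) * q) + (c:ℝ) := by ring
      rw [this, per c hc]
    have step : ∀ x : ℝ, (fdiff (q:ℝ))^[j] (fdiff ((m:ℝ) * q) G) x
        = (m:ℝ) * (fdiff (q:ℝ))^[j+1] G x := by
      intro x
      rw [hexp]
      have e : ∀ i ∈ Finset.range m, (fdiff (q:ℝ))^[j+1] G (x + i * q)
          = (fdiff (q:ℝ))^[j+1] G x := by
        intro i _
        rcases Nat.eq_zero_or_pos i with hi | hi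
        · subst hi; norm_num
        · have hc : (0:ℚ) < i * q := by positivity
          have := per ((i:ℚ) * q) hc x
          have cast : ((((i:ℚ)) * q : ℚ) : ℝ) = (i:ℝ) * q := by push_cast; ring
          rw [cast] at this
          exact this
      rw [Finset.sum_congr rfl e, Finset.sum_const, Finset.card_range, nsmul_eq_mul]
    rw [iter_inner]
    rw [ih (fdiff ((m:ℝ) * q) G) q per' hq m z]
    rw [step z]
    ring

open Polynomial in
lemma poly_fdiff : ∀ (n : ℕ) (p : ℝ[X]), p.natDegree ≤ n → ∀ (h x : ℝ),
    (fdiff h)^[n] (fun y => p.eval y) x = (n.factorial : ℝ) * p.coeff n * h ^ n := by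
  intro n
  induction n with
  | zero =>
    intro p hdeg h x
    have hp := Polynomial.eq_C_of_natDegree_le_zero hdeg
    rw [hp]
    simp
  | succ n ih =>
    intro p hdeg h x
    set q : ℝ[X] := Polynomial.taylor h p - p with hq
    have hcomp : fdiff h (fun y => p.eval y) = fun y => q.eval y := by
      funext y
      simp [fdiff, hq, Polynomial.taylor_eval]
    -- hasseDeriv facts
    have hd1 : Polynomial.hasseDeriv (n+1) p = Polynomial.C (p.coeff (n+1)) := by
      ext i
      rw [Polynomial.hasseDeriv_coeff]
      rcases Nat.eq_zero_or_pos i with hi | hi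
      · subst hi; simp
      · have h1 : p.natDegree < i + (n+1) := by omega
        rw [Polynomial.coeff_eq_zero_of_natDegree_lt h1, Polynomial.coeff_C,
          if_neg (by omega)]
        simp
    have hd2 : Polynomial.hasseDeriv n p
        = Polynomial.C (p.coeff n) + Polynomial.C ((n+1 : ℕ) * p.coeff (n+1)) * Polynomial.X := by
      ext i
      rw [Polynomial.hasseDeriv_coeff]
      match i with
      | 0 => simp
      | 1 =>
        simp only [Polynomial.coeff_add, Polynomial.coeff_C, Polynomial.coeff_C_mul,
          Polynomial.coeff_X_one, if_neg (one_ne_zero), Nat.add_comm 1 n,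
          Nat.choose_succ_self_right]
        push_cast
        ring
      | (k+2) =>
        have h1 : p.natDegree < k + 2 + n := by omega
        rw [Polynomial.coeff_eq_zero_of_natDegree_lt h1]
        simp [Polynomial.coeff_C, Polynomial.coeff_X, Polynomial.coeff_one]
    have hqdeg : q.natDegree ≤ n := by
      rw [Polynomial.natDegree_le_iff_coeff_eq_zero]
      intro m hm
      rw [hq, Polynomial.coeff_sub, Polynomial.taylor_coeff]
      rcases Nat.lt_or_ge m (n+2) with hm2 | hm2
      · have hm1 : m = n + 1 := by omega
        subst hm1
        rw [hd1]
        simp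
      · rw [Polynomial.coeff_eq_zero_of_natDegree_lt (by omega)]
        have : (Polynomial.hasseDeriv m p) = 0 := by
          ext i
          rw [Polynomial.hasseDeriv_coeff]
          rw [Polynomial.coeff_eq_zero_of_natDegree_lt (by omega)]
          simp
        rw [this]
        simp
    have hqcoeff : q.coeff n = (n+1 : ℕ) * p.coeff (n+1) * h := by
      rw [hq, Polynomial.coeff_sub, Polynomial.taylor_coeff, hd2]
      simp
    rw [iter_inner, hcomp, ih q hqdeg h x, hqcoeff]
    rw [Nat.factorial_succ]
    push_cast
    ring

lemma fact_ne : ∀ n : ℕ, ((n.factorial : ℝ)) ≠ 0 := fun n =>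
  Nat.cast_ne_zero.mpr n.factorial_ne_zero

lemma mono_iter (n : ℕ) (f : ℝ → ℝ) (hf : IsMonomial n f) (x h : ℝ) :
    (fdiff h)^[n] f x = (n.factorial : ℝ) * f h := by
  have := hf x h
  field_simp at this
  linarith [this]

lemma mono_nat_mul (n : ℕ) (f : ℝ → ℝ) (hf : IsMonomial n f) (m : ℕ) (h : ℝ) :
    f ((m:ℝ) * h) = (m:ℝ)^n * f h := by
  have h1 : (fdiff ((m:ℝ) * h))^[n] f 0 = (m:ℝ)^n * ((n.factorial : ℝ) * f h) :=
    iter_const h n f _ (fun x => mono_iter n f hf x h) m 0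
  have h2 : (fdiff ((m:ℝ) * h))^[n] f 0 = (n.factorial : ℝ) * f ((m:ℝ) * h) :=
    mono_iter n f hf 0 _
  have := fact_ne n
  field_simp at h1 h2
  rw [h2] at h1
  have h3 : (n.factorial : ℝ) * f (↑m * h) = (n.factorial : ℝ) * ((m:ℝ)^n * f h) := by
    rw [h1]; ring
  exact mul_left_cancel₀ this h3

lemma mono_neg (n : ℕ) (f : ℝ → ℝ) (hf : IsMonomial n f) (h : ℝ) :
    f (-h) = (-1:ℝ)^n * f h := by
  have h1 : (fdiff (-h))^[n] f 0 = (n.factorial : ℝ) * f (-h) := mono_iter n f hf 0 _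
  have h2 := iter_neg_step n f h 0
  rw [h1, mono_iter n f hf (0 - n * h) h] at h2
  have h3 : (n.factorial : ℝ) * f (-h) = (n.factorial : ℝ) * ((-1:ℝ)^n * f h) := by
    rw [h2]; ring
  exact mul_left_cancel₀ (fact_ne n) h3

lemma mono_rat_mul (n : ℕ) (f : ℝ → ℝ) (hf : IsMonomial n f) (q : ℚ) (h : ℝ) :
    f ((q:ℝ) * h) = (q:ℝ)^n * f h := by
  -- first for nonneg q
  have key : ∀ q : ℚ, 0 ≤ q → f ((q:ℝ) * h) = (q:ℝ)^n * f h := by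
    intro q hq
    have hden : (0:ℝ) < (q.den : ℝ) := by exact_mod_cast q.den_pos
    have hnum : ((q.num.toNat : ℚ)) = (q.num : ℚ) := by
      have := Int.toNat_of_nonneg (Rat.num_nonneg.mpr hq)
      exact_mod_cast congrArg (fun z : ℤ => (z : ℚ)) this
    have e1 : f ((q.den : ℝ) * ((q:ℝ) * h)) = (q.den:ℝ)^n * f ((q:ℝ) * h) :=
      mono_nat_mul n f hf q.den _
    have e2 : (q.den : ℝ) * ((q:ℝ) * h) = (q.num.toNat : ℝ) * h := by
      have : ((q.den : ℚ)) * q = (q.num.toNat : ℚ) := by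
        rw [hnum]
        rw [mul_comm]
        exact_mod_cast Rat.mul_den_eq_num q
      calc (q.den : ℝ) * ((q:ℝ) * h) = (((q.den : ℚ) * q : ℚ) : ℝ) * h := by push_cast; ring
        _ = (q.num.toNat : ℝ) * h := by rw [this]; push_cast; ring
    have e3 : f ((q.num.toNat : ℝ) * h) = (q.num.toNat : ℝ)^n * f h :=
      mono_nat_mul n f hf q.num.toNat h
    rw [e2, e3] at e1
    have e4 : ((q.num.toNat : ℝ)) = (q.den : ℝ) * (q:ℝ) := by
      have : ((q.den : ℚ)) * q = (q.num.toNat : ℚ) := by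
        rw [hnum, mul_comm]; exact_mod_cast Rat.mul_den_eq_num q
      exact_mod_cast (congrArg (Rat.cast (K := ℝ)) this).symm
    rw [e4] at e1
    have hdn : ((q.den : ℝ))^n ≠ 0 := by positivity
    have : (q.den:ℝ)^n *f ((q:ℝ)*h) = (q.den:ℝ)^n * ((q:ℝ)^n * f h) := by
      rw [← e1]; ring
    exact mul_left_cancel₀ hdn this
  rcases le_or_gt 0 q with hq | hq
  · exact key q hq
  · have h1 : f ((q:ℝ) * h) = f (-(((-q : ℚ):ℝ) * h)) := by push_cast; ring_nf
    rw [h1, mono_neg n f hf, key (-q) (by linarith)]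
    push_cast
    rw [← mul_assoc, ← mul_pow]
    ring_nf

lemma mono_pow (n : ℕ) (c : ℝ) : IsMonomial n (fun x => c * x ^ n) := by
  intro x h
  have hp : ((Polynomial.C c * Polynomial.X ^ n : Polynomial ℝ)).natDegree ≤ n := by
    apply le_trans (Polynomial.natDegree_C_mul_le _ _)
    simp [Polynomial.natDegree_X_pow]
  have := poly_fdiff n (Polynomial.C c * Polynomial.X ^ n) hp h x
  have he : (fun y => (Polynomial.C c * Polynomial.X ^ n : Polynomial ℝ).eval y)
      = fun y => c * y ^ n := by funext y; simp
  rw [he] at this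
  rw [this]
  have hc : (Polynomial.C c * Polynomial.X ^ n : Polynomial ℝ).coeff n = c := by
    simp [Polynomial.coeff_C_mul, Polynomial.coeff_X_pow]
  rw [hc]
  field_simp

lemma mono_sub (n : ℕ) (f g : ℝ → ℝ) (hf : IsMonomial n f) (hg : IsMonomial n g) :
    IsMonomial n (fun x => f x - g x) := by
  intro x h
  have e : (fun x => f x - g x) = fun x => f x + (-1 : ℝ) * g x := by funext y; ring
  rw [e, iter_add, iter_cmul]
  have h1 := mono_iter n f hf x h
  have h2 := mono_iter n g hg x h
  simp only [h1, h2]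
  field_simp


lemma main_vanish (n : ℕ) (hn : 1 ≤ n) (g : ℝ → ℝ) (hg : IsMonomial n g)
    (hQ : ∀ q : ℚ, g q = 0) (K : ℝ)
    (hb : ∀ x, |g x| ≤ K * (1 + |x|)^n) : ∀ x, g x = 0 := by
  have hK0 : 0 ≤ K := by
    have := hb 0
    simp at this
    exact le_trans (abs_nonneg _) this
  -- descending induction
  have S : ∀ k, k ≤ n → ∀ (q : ℚ), 0 < q → ∀ z, (fdiff (q:ℝ))^[n - k] g z = 0 := by
    intro k
    induction k with
    | zero =>
      intro _ q hq z
      rw [Nat.sub_zero, mono_iter n g hg z (q:ℝ)]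
      have : ((q:ℚ):ℝ) = ((q:ℚ):ℝ) := rfl
      have hgq : g ((q:ℚ):ℝ) = 0 := hQ q
      rw [hgq, mul_zero]
    | succ k ih =>
      intro hk1 q hq z
      have hk : k ≤ n := by omega
      set j := n - (k+1) with hjdef
      have hj1 : j + 1 = n - k := by omega
      have hjn : j + 1 ≤ n := by omega
      have hSj1 : ∀ q : ℚ, 0 < q → ∀ z, (fdiff (q:ℝ))^[j+1] g z = 0 := by
        intro q hq z
        rw [hj1]; exact ih hk q hq z
      -- periodicity for all positive rational steps
      have per : ∀ (q' c : ℚ), 0 < q' → 0 < c → ∀ x,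
          (fdiff ((q':ℚ):ℝ))^[j] g (x + (c:ℝ)) = (fdiff ((q':ℚ):ℝ))^[j] g x := by
        intro q' c hq' hc x
        set u : ℚ := 1 / ((q'.den : ℚ) * (c.den : ℚ)) with hudef
        have hu : 0 < u := by
          have h1 : (0:ℚ) < (q'.den : ℚ) := by exact_mod_cast q'.den_pos
          have h2 : (0:ℚ) < (c.den : ℚ) := by exact_mod_cast c.den_pos
          positivity
        set a : ℕ := c.num.toNat * q'.den with hadef
        set b : ℕ := q'.num.toNat * c.den with hbdef
        have hca : ((a:ℚ)) * u = c := by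
          have h2 : ((c.num.toNat : ℤ)) = c.num :=
            Int.toNat_of_nonneg (le_of_lt (Rat.num_pos.mpr hc))
          have h1 : ((a:ℚ)) = (c.num : ℚ) * (q'.den : ℚ) := by
            rw [hadef]
            push_cast
            rw [show ((c.num.toNat : ℚ)) = (c.num : ℚ) from by exact_mod_cast h2]
          have hdd : ((q'.den:ℚ)) * ((c.den:ℚ)) ≠ 0 := by
            have hx1 : (0:ℚ) < (q'.den : ℚ) := by exact_mod_cast q'.den_pos
            have hx2 : (0:ℚ) < (c.den : ℚ) := by exact_mod_cast c.den_pos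
            positivity
          rw [h1, hudef, mul_one_div, div_eq_iff hdd]
          linear_combination (-(q'.den : ℚ)) * (Rat.mul_den_eq_num c)
        have hqb : ((b:ℚ)) * u = q' := by
          have h2 : ((q'.num.toNat : ℤ)) = q'.num :=
            Int.toNat_of_nonneg (le_of_lt (Rat.num_pos.mpr hq'))
          have h1 : ((b:ℚ)) = (q'.num : ℚ) * (c.den : ℚ) := by
            rw [hbdef]
            push_cast
            rw [show ((q'.num.toNat : ℚ)) = (q'.num : ℚ) from by exact_mod_cast h2]
          have hdd : ((q'.den:ℚ)) * ((c.den:ℚ)) ≠ 0 := by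
            have hx1 : (0:ℚ) < (q'.den : ℚ) := by exact_mod_cast q'.den_pos
            have hx2 : (0:ℚ) < (c.den : ℚ) := by exact_mod_cast c.den_pos
            positivity
          rw [h1, hudef, mul_one_div, div_eq_iff hdd]
          linear_combination (-(c.den : ℚ)) * (Rat.mul_den_eq_num q')
        have h0 : ∀ y, (fdiff ((u:ℚ):ℝ))^[j+1] g y = 0 := hSj1 u hu
        have key := iter_mixed' ((u:ℚ):ℝ) j a b g h0 x
        have ca : ((a:ℕ):ℝ) * ((u:ℚ):ℝ) = ((c:ℚ):ℝ) := by
          rw [← hca]; push_cast; ring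
        have cb : ((b:ℕ):ℝ) * ((u:ℚ):ℝ) = ((q':ℚ):ℝ) := by
          rw [← hqb]; push_cast; ring
        rw [ca, cb] at key
        simpa [fdiff, sub_eq_zero] using key
      -- now the scaling estimate
      suffices hsuff : ∀ z', (fdiff ((q:ℚ):ℝ))^[j] g z' = 0 by
        exact hsuff z
      intro z'
      set X := (fdiff ((q:ℚ):ℝ))^[j] g z' with hX
      set B := 2^j * K * (2 + (j:ℝ) * (q:ℝ))^n with hB
      have hq0 : (0:ℝ) < (q:ℝ) := by exact_mod_cast hq
      have hBnn : 0 ≤ B := by positivity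
      have key : ∀ m : ℕ, 1 ≤ m → (m:ℝ) * |X| ≤ B := by
        intro m hm
        have hm0 : (0:ℝ) < (m:ℝ) := by exact_mod_cast hm
        have hmq : (0:ℚ) < (m:ℚ) * q := by
          have : (0:ℚ) < (m:ℚ) := by exact_mod_cast hm
          positivity
        -- e1 : scaling
        have e1 : (fdiff ((m:ℝ) * (q:ℝ)))^[j] g ((m:ℝ) * z') = (m:ℝ)^n * X := by
          rw [← iter_dilate j g (m:ℝ) ((q:ℚ):ℝ) z']
          have hgm : (fun x => g ((m:ℝ) * x)) = fun x => (m:ℝ)^n * g x := by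
            funext x; exact mono_nat_mul n g hg m x
          rw [hgm, iter_cmul]
        -- choose rational r near m z'
        obtain ⟨r, hr1, hr2⟩ := exists_rat_btwn
          (show (m:ℝ) * z' - 1 < (m:ℝ) * z' by linarith)
        set w := (m:ℝ) * z' - (r:ℝ) with hw
        have hw0 : 0 < w := by simp [hw]; linarith
        have hw1 : w < 1 := by simp [hw]; linarith
        have hcast : (m:ℝ) * ((q:ℚ):ℝ) = (((m:ℚ) * q : ℚ):ℝ) := by push_cast; ring
        -- e2 : move to w by periodicity
        have e2 : (fdiff ((m:ℝ) * (q:ℝ)))^[j] g ((m:ℝ) * z')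
            = (fdiff ((m:ℝ) * (q:ℝ)))^[j] g w := by
          rw [hcast]
          rcases lt_trichotomy r 0 with hrs | hrs | hrs
          · have hper := per ((m:ℚ) * q) (-r) hmq (by exact neg_pos.mpr hrs) ((m:ℝ) * z')
            have harg : (m:ℝ) * z' + ((-r : ℚ):ℝ) = w := by
              rw [hw]; push_cast; ring
            rw [harg] at hper
            exact hper.symm
          · have : w = (m:ℝ) * z' := by rw [hw, hrs]; push_cast; ring
            rw [this]
          · have hper := per ((m:ℚ) * q) r hmq hrs w
            have harg : w + ((r : ℚ):ℝ) = (m:ℝ) * z' := by rw [hw]; ring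
            rw [harg] at hper
            exact hper
        -- e3 : unfold multiple step at w
        have e3 : (fdiff ((m:ℝ) * (q:ℝ)))^[j] g w
            = (m:ℝ)^j * (fdiff ((q:ℚ):ℝ))^[j] g w :=
          iter_periodic_mul j g q (fun c hc x => per q c hq hc x) hq m w
        -- e4 : bound at w
        have e4 : |(fdiff ((q:ℚ):ℝ))^[j] g w| ≤ B := by
          have hbd := iter_bound n j K ((q:ℚ):ℝ) g hb w
          have mono : (1 + |w| + (j:ℝ) * |(q:ℝ)|)^n ≤ (2 + (j:ℝ) * (q:ℝ))^n := by
            apply pow_le_pow_left₀ (by positivity)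
            have : |w| ≤ 1 := by rw [abs_of_pos hw0]; linarith
            rw [abs_of_pos hq0]
            linarith
          calc |(fdiff ((q:ℚ):ℝ))^[j] g w| ≤ 2^j * K * (1 + |w| + (j:ℝ) * |(q:ℝ)|)^n := hbd
            _ ≤ 2^j * K * (2 + (j:ℝ) * (q:ℝ))^n := by
                have h2j : (0:ℝ) ≤ 2^j * K := by positivity
                exact mul_le_mul_of_nonneg_left mono h2j
            _ = B := rfl
        -- combine
        have comb : (m:ℝ)^n * |X| ≤ (m:ℝ)^j * B := by
          have : (m:ℝ)^n * |X| = |(m:ℝ)^j * (fdiff ((q:ℚ):ℝ))^[j] g w| := by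
            rw [← e3, ← e2, e1, abs_mul, abs_of_pos (by positivity : (0:ℝ) < (m:ℝ)^n)]
          rw [this, abs_mul, abs_of_pos (by positivity : (0:ℝ) < (m:ℝ)^j)]
          exact mul_le_mul_of_nonneg_left e4 (by positivity)
        have hpow : (m:ℝ) * (m:ℝ)^j ≤ (m:ℝ)^n := by
          have h1 : (m:ℝ) * (m:ℝ)^j = (m:ℝ)^(j+1) := by ring
          rw [h1]
          apply pow_le_pow_right₀ (by exact_mod_cast hm) hjn
        have h2 : (m:ℝ) * (m:ℝ)^j * |X| ≤ (m:ℝ)^j * B := by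
          calc (m:ℝ) * (m:ℝ)^j * |X| ≤ (m:ℝ)^n * |X| :=
            mul_le_mul_of_nonneg_right hpow (abs_nonneg _)
            _ ≤ (m:ℝ)^j * B := comb
        have hmj : (0:ℝ) < (m:ℝ)^j := by positivity
        nlinarith [abs_nonneg X]
      -- conclude X = 0
      by_contra hXne
      have hXpos : 0 < |X| := abs_pos.mpr hXne
      obtain ⟨m, hm⟩ := exists_nat_gt (B / |X|)
      have hm1 : 1 ≤ m + 1 := by omega
      have := key (m+1) hm1
      have hgt : B / |X| < ((m+1 : ℕ):ℝ) := by push_cast; push_cast at hm; linarith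
      have : B < ((m+1:ℕ):ℝ) * |X| := by
        rw [div_lt_iff₀ hXpos] at hgt; linarith
      linarith [key (m+1) hm1]
  have := S n le_rfl 1 one_pos
  intro x
  have h0 := this x
  simpa using h0


end MonoAux

open MonoAux in
theorem stmt6 (n : ℕ) (f : ℝ → ℝ) (hf : IsMonomial n f) (hdisc : ¬ Continuous f) :
    (∀ M : ℝ, ∃ h : ℝ, h ≠ 0 ∧ M < |f h / h ^ n|) ∧
    (∀ M : ℝ, ∃ x ∈ Set.Icc (1 : ℝ) 2, M < |f x|) := by
  rcases Nat.eq_zero_or_pos n with hn0 | hn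
  · exfalso
    apply hdisc
    subst hn0
    have hc : ∀ x : ℝ, f x = f 0 := by
      intro x
      have h1 := hf x 0
      simpa [Nat.factorial] using h1
    have : f = fun _ => f 0 := funext hc
    rw [this]
    exact continuous_const
  -- n ≥ 1
  have part1 : ∀ M : ℝ, ∃ h : ℝ, h ≠ 0 ∧ M < |f h / h ^ n| := by
    by_contra hcon
    push_neg at hcon
    obtain ⟨M, hM⟩ := hcon
    have hM0 : 0 ≤ M := le_trans (abs_nonneg _) (hM 1 one_ne_zero)
    set c := f 1 with hc
    set g : ℝ → ℝ := fun x => f x - c * x ^ n with hgdef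
    have hg : IsMonomial n g := mono_sub n f _ hf (mono_pow n c)
    have hf0 : f 0 = 0 := by
      have := mono_nat_mul n f hf 0 0
      simpa [zero_pow (by omega : n ≠ 0)] using this
    have hQ : ∀ q : ℚ, g q = 0 := by
      intro q
      have h1 := mono_rat_mul n f hf q 1
      rw [mul_one] at h1
      simp only [hgdef, h1, hc]
      ring
    have hgb : ∀ x, |g x| ≤ (M + |c|) * (1 + |x|) ^ n := by
      intro x
      have hbase : |g x| ≤ (M + |c|) * |x| ^ n := by
        rcases eq_or_ne x 0 with hx | hx
        · subst hx
          simp [hgdef, hf0, zero_pow (by omega : n ≠ 0)]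
        · have h1 := hM x hx
          have hxn : |x ^ n| = |x| ^ n := abs_pow x n
          have h2 : |f x| ≤ M * |x| ^ n := by
            have h3 : |f x / x ^ n| * |x ^ n| = |f x| := by
              rw [← abs_mul]
              congr 1
              field_simp
            rw [← h3, hxn]
            have : (0:ℝ) ≤ |x|^n := by positivity
            nlinarith [abs_nonneg (f x / x ^ n)]
          have h4 : |g x| ≤ |f x| + |c| * |x| ^ n := by
            simp only [hgdef]
            calc |f x - c * x ^ n| ≤ |f x| + |c * x ^ n| := abs_sub _ _
              _ = |f x| + |c| * |x| ^ n := by rw [abs_mul, abs_pow]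
          nlinarith
      have hpow : |x| ^ n ≤ (1 + |x|) ^ n := by
        apply pow_le_pow_left₀ (abs_nonneg x)
        linarith
      have hMc : 0 ≤ M + |c| := by positivity
      calc |g x| ≤ (M + |c|) * |x| ^ n := hbase
        _ ≤ (M + |c|) * (1 + |x|) ^ n := by nlinarith
    have hz := main_vanish n hn g hg hQ (M + |c|) hgb
    apply hdisc
    have hfx : f = fun x => c * x ^ n := by
      funext x
      have := hz x
      simp only [hgdef] at this
      linarith
    rw [hfx]
    fun_prop
  refine ⟨part1, ?_⟩
  intro M
  obtain ⟨h, hh, hlt⟩ := part1 M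
  set t := |h| with ht
  have ht0 : 0 < t := abs_pos.mpr hh
  have habs : |f t / t ^ n| = |f h / h ^ n| := by
    rcases abs_cases h with ⟨h1, _⟩ | ⟨h1, _⟩
    · rw [ht, h1]
    · rw [ht, h1]
      have e1 : f (-h) = (-1:ℝ)^n * f h := mono_neg n f hf h
      have e2 : (-h)^n = (-1:ℝ)^n * h^n := by rw [neg_pow]
      have e3 : ((-1:ℝ))^n ≠ 0 := pow_ne_zero _ (by norm_num)
      rw [e1, e2, mul_div_mul_left _ _ e3]
  obtain ⟨q, hq1, hq2⟩ := exists_rat_btwn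
    (show 1 / t < 2 / t from (div_lt_div_iff_of_pos_right ht0).mpr one_lt_two)
  have hq0 : (0:ℝ) < (q:ℝ) := lt_trans (by positivity) hq1
  set x := (q:ℝ) * t with hxdef
  have hx1 : 1 < x := (div_lt_iff₀ ht0).mp hq1
  have hx2 : x < 2 := (lt_div_iff₀ ht0).mp hq2
  refine ⟨x, ⟨le_of_lt hx1, le_of_lt hx2⟩, ?_⟩
  have hfx : f x = (q:ℝ)^n * f t := mono_rat_mul n f hf q t
  have habs2 : |f x| = ((q:ℝ) * t)^n * (|f t| / t^n) := by
    rw [hfx, abs_mul, abs_of_pos (by positivity : (0:ℝ) < (q:ℝ)^n), mul_pow]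
    field_simp
  have hge : (1:ℝ) ≤ ((q:ℝ) * t)^n := one_le_pow₀ (le_of_lt hx1)
  have e : |f t| / t^n = |f h / h^n| := by
    rw [← habs, abs_div, abs_of_pos (by positivity : (0:ℝ) < t^n)]
  have hM2 : M < |f t| / t^n := by rw [e]; exact hlt
  have hpos : 0 ≤ |f t| / t^n := by positivity
  rw [habs2]
  nlinarith
end

section
/- If f : ℝ → ℝ is a discontinuous n-monomial and h₀, h₁ are nonzero reals with A₀ = f(h₀)/h₀^n ≠ A₁ = f(h₁)/h₁^n, then for every x and every y between A₀ x^n and A₁ x^n, the point (x, y) lies in the closure of the graph of f in ℝ². -/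
lemma iter_eq {n : ℕ} {f : ℝ → ℝ} (hf : IsMonomial n f) (v x : ℝ) :
    ((fdiff v)^[n] f) x = (n.factorial : ℝ) * f v := by
  have h := hf x v
  have hn : (n.factorial : ℝ) ≠ 0 := Nat.cast_ne_zero.mpr n.factorial_ne_zero
  field_simp at h
  linarith

lemma diff_zero {n : ℕ} {f : ℝ → ℝ} (hf : IsMonomial n f) (v x : ℝ) :
    ((fdiff v)^[n+1] f) x = 0 := by
  rw [Function.iterate_succ_apply']
  show ((fdiff v)^[n] f) (x + v) - ((fdiff v)^[n] f) x = 0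
  rw [iter_eq hf, iter_eq hf]
  ring


lemma newton (w : ℝ) : ∀ (n : ℕ) (f : ℝ → ℝ), (∀ x, ((fdiff w)^[n+1] f) x = 0) →
    ∀ (b : ℝ) (m : ℕ), f (b + m * w) =
      ∑ k ∈ Finset.range (n+1), (m.choose k : ℝ) * ((fdiff w)^[k] f b) := by
  intro n
  induction n with
  | zero =>
    intro f hz b m
    rw [show 0+1 = 1 from rfl, Finset.sum_range_one]
    simp only [Nat.choose_zero_right, Nat.cast_one, one_mul, Function.iterate_zero_apply]
    induction m with
    | zero => simp
    | succ m ih =>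
      have h := hz (b + m * w)
      simp only [zero_add, Function.iterate_one, fdiff] at h
      push_cast
      have : b + (m + 1 : ℝ) * w = b + m * w + w := by ring
      rw [this]
      push_cast at ih
      linarith
  | succ n IH =>
    intro f hz b m
    induction m with
    | zero => simp [Finset.sum_range_succ']
    | succ m ih =>
      have hg : ∀ x, ((fdiff w)^[n+1] (fdiff w f)) x = 0 := by
        intro x
        have := hz x
        rwa [Function.iterate_succ_apply] at this
      have h2 := IH (fdiff w f) hg b m
      have hstep : f (b + (m+1 : ℕ) * w) = f (b + m * w) + (fdiff w f) (b + m * w) := by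
        simp only [fdiff]
        push_cast
        ring_nf
      rw [hstep, ih, h2]
      have hiter : ∀ k, ((fdiff w)^[k] (fdiff w f)) b = ((fdiff w)^[k+1] f) b := by
        intro k; rw [Function.iterate_succ_apply]
      simp only [hiter]
      rw [Finset.sum_range_succ' (fun k => ((m+1).choose k : ℝ) * ((fdiff w)^[k] f b)) (n+1),
          Finset.sum_range_succ' (fun k => (m.choose k : ℝ) * ((fdiff w)^[k] f b)) (n+1)]
      simp only [Nat.choose_zero_right, Nat.cast_one, one_mul, Function.iterate_zero_apply]
      have key : (∑ k ∈ Finset.range (n + 1), (m.choose (k + 1) : ℝ) * (fdiff w)^[k + 1] f b) +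
          ∑ k ∈ Finset.range (n + 1), (m.choose k : ℝ) * (fdiff w)^[k + 1] f b =
          ∑ k ∈ Finset.range (n + 1), ((m + 1).choose (k + 1) : ℝ) * (fdiff w)^[k + 1] f b := by
        rw [← Finset.sum_add_distrib]
        refine Finset.sum_congr rfl (fun k _ => ?_)
        rw [Nat.choose_succ_succ m k]
        push_cast
        ring
      linarith


open Polynomial in
noncomputable def interp (n : ℕ) (f : ℝ → ℝ) (b w : ℝ) : Polynomial ℝ :=
  ∑ k ∈ Finset.range (n+1), C (((fdiff w)^[k] f b) / k.factorial) * descPochhammer ℝ k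

open Polynomial in
lemma interp_natDegree_le (n : ℕ) (f : ℝ → ℝ) (b w : ℝ) : (interp n f b w).natDegree ≤ n := by
  refine natDegree_sum_le_of_forall_le _ _ (fun k hk => ?_)
  refine (natDegree_C_mul_le _ _).trans ?_
  rw [descPochhammer_natDegree]
  exact Nat.lt_succ_iff.mp (Finset.mem_range.mp hk)

open Polynomial in
lemma interp_eval_nat (n : ℕ) (f : ℝ → ℝ) (b w : ℝ)
    (hz : ∀ x, ((fdiff w)^[n+1] f) x = 0) (m : ℕ) :
    (interp n f b w).eval (m : ℝ) = f (b + m * w) := by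
  rw [newton w n f hz b m, interp, eval_finset_sum]
  refine Finset.sum_congr rfl (fun k _ => ?_)
  rw [eval_mul, eval_C, descPochhammer_eval_eq_descFactorial,
    Nat.descFactorial_eq_factorial_mul_choose]
  have : (k.factorial : ℝ) ≠ 0 := Nat.cast_ne_zero.mpr k.factorial_ne_zero
  push_cast
  field_simp

open Polynomial in
lemma poly_ext {p q : Polynomial ℝ} (h : ∀ m : ℕ, p.eval (m : ℝ) = q.eval (m : ℝ)) : p = q := by
  refine Polynomial.eq_of_infinite_eval_eq p q ?_
  have : Set.range ((↑·) : ℕ → ℝ) ⊆ {x | p.eval x = q.eval x} := by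
    rintro _ ⟨m, rfl⟩; exact h m
  exact ((Set.infinite_range_of_injective Nat.cast_injective).mono this)


open Polynomial in
lemma interp_eval_rat (n : ℕ) (f : ℝ → ℝ)
    (hz : ∀ v x, ((fdiff v)^[n+1] f) x = 0) (u v : ℝ) (q : ℚ) :
    f (u + (q : ℝ) * v) = (interp n f u v).eval (q : ℝ) := by
  set d : ℕ := q.den with hd
  have hd0 : (d : ℝ) ≠ 0 := Nat.cast_ne_zero.mpr q.den_nz
  set a : ℤ := q.num with ha
  set M : ℕ := a.natAbs with hM
  set w : ℝ := v / d with hw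
  have hdw : (d : ℝ) * w = v := by rw [hw]; field_simp
  set b : ℝ := u - M * v with hb
  -- m₀
  have hm0 : (0 : ℤ) ≤ a + M * d := by
    have hMd : M ≤ M * d := Nat.le_mul_of_pos_right _ q.pos
    rw [show ((M:ℤ) * (d:ℤ)) = ((M * d : ℕ) : ℤ) by push_cast; ring]
    omega
  set m₀ : ℕ := (a + M * d).toNat with hm₀
  have hm₀c : (m₀ : ℝ) = (a : ℝ) + M * d := by
    have : ((m₀ : ℤ) : ℝ) = ((a + M * d : ℤ) : ℝ) := by
      rw [Int.toNat_of_nonneg hm0]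
    push_cast at this ⊢
    linarith
  have hq : (q : ℝ) = (a : ℝ) / d := by
    rw [ha, hd]; exact Rat.cast_def q
  -- polynomial identities
  have eq₁ : (interp n f b w).comp (X + C ((M : ℝ) * d)) = interp n f u w := by
    apply poly_ext
    intro m
    rw [eval_comp]
    simp only [eval_add, eval_X, eval_C]
    have : (m : ℝ) + (M : ℝ) * d = ((m + M * d : ℕ) : ℝ) := by push_cast; ring
    rw [this, interp_eval_nat n f b w (hz w), interp_eval_nat n f u w (hz w)]
    congr 1
    push_cast
    rw [hb]
    have : ((M : ℝ) * d) * w = (M : ℝ) * v := by rw [mul_assoc, hdw]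
    nlinarith [hdw]
  have eq₂ : (interp n f u w).comp (C (d : ℝ) * X) = interp n f u v := by
    apply poly_ext
    intro m
    rw [eval_comp]
    simp only [eval_mul, eval_X, eval_C]
    have : (d : ℝ) * m = ((d * m : ℕ) : ℝ) := by push_cast; ring
    rw [this, interp_eval_nat n f u w (hz w), interp_eval_nat n f u v (hz v)]
    congr 1
    push_cast
    rw [show (d:ℝ) * (m:ℝ) * w = (m:ℝ) * ((d:ℝ) * w) by ring, hdw]
  -- chain
  have e0 : u + (q : ℝ) * v = b + m₀ * w := by
    rw [hb, hm₀c, hq, hw]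
    field_simp
    ring
  rw [e0, ← interp_eval_nat n f b w (hz w) m₀]
  have e1 : (m₀ : ℝ) = ((q : ℝ) * d) + (M : ℝ) * d := by
    rw [hm₀c, hq]; field_simp
  rw [e1]
  have := congrArg (fun p => p.eval ((q:ℝ) * d)) eq₁
  simp only [eval_comp, eval_add, eval_X, eval_C] at this
  rw [this]
  have h2 := congrArg (fun p => p.eval (q:ℝ)) eq₂
  simp only [eval_comp, eval_mul, eval_X, eval_C] at h2
  rw [← h2, mul_comm]


open Polynomial in
lemma polyD : ∀ (n : ℕ) (P : Polynomial ℝ), P.natDegree ≤ n → ∀ (d x : ℝ),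
    ((fdiff d)^[n] (fun t => P.eval t)) x = (n.factorial : ℝ) * P.coeff n * d ^ n := by
  intro n
  induction n with
  | zero =>
    intro P hP d x
    simp only [Function.iterate_zero_apply, Nat.factorial_zero, Nat.cast_one, pow_zero,
      one_mul, mul_one]
    conv_lhs => rw [P.eq_C_of_natDegree_le_zero hP]
    simp
  | succ n IH =>
    intro P hP d x
    set Q : Polynomial ℝ := taylor d P - P with hQ
    have hcoeff : ∀ m : ℕ, Q.coeff m = (hasseDeriv m P).eval d - P.coeff m := by
      intro m; rw [hQ, coeff_sub, taylor_coeff]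
    -- high coefficients of hasseDeriv
    have hHD : ∀ m : ℕ, n < m → (hasseDeriv m P).natDegree ≤ (n + 1) - m :=
      fun m _ => (P.natDegree_hasseDeriv_le m).trans (Nat.sub_le_sub_right hP m)
    have hQdeg : Q.natDegree ≤ n := by
      rw [natDegree_le_iff_coeff_eq_zero]
      intro m hm
      rw [hcoeff]
      rcases Nat.lt_or_ge m (n+2) with hm2 | hm2
      · have hmeq : m = n + 1 := by omega
        subst hmeq
        have h0 : (hasseDeriv (n+1) P).natDegree ≤ 0 := by simpa using hHD (n+1) (Nat.lt_succ_self n)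
        rw [(hasseDeriv (n+1) P).eq_C_of_natDegree_le_zero h0, eval_C, hasseDeriv_coeff]
        simp
      · have h1 : P.coeff m = 0 := coeff_eq_zero_of_natDegree_lt (lt_of_le_of_lt hP (by omega))
        have h2 : (hasseDeriv m P) = 0 :=
          P.hasseDeriv_eq_zero_of_lt_natDegree m (lt_of_le_of_lt hP (by omega))
        rw [h1, h2]
        simp
    have hQn : Q.coeff n = (n + 1 : ℝ) * P.coeff (n+1) * d := by
      rw [hcoeff]
      have h1 : (hasseDeriv n P).natDegree < 2 := by
        have := P.natDegree_hasseDeriv_le n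
        omega
      rw [eval_eq_sum_range' h1]
      rw [Finset.sum_range_succ, Finset.sum_range_one]
      rw [hasseDeriv_coeff, hasseDeriv_coeff]
      simp only [pow_zero, pow_one, Nat.zero_add, Nat.add_comm 1 n]
      rw [Nat.choose_self, Nat.choose_succ_self_right]
      push_cast
      ring
    have hfun : (fdiff d) (fun t => P.eval t) = (fun t => Q.eval t) := by
      funext t
      simp only [fdiff, hQ, eval_sub, taylor_eval]
    rw [Function.iterate_succ_apply, hfun, IH Q hQdeg d x, hQn]
    push_cast [Nat.factorial_succ]
    ring


lemma iter_agree {w x : ℝ} {f₁ f₂ : ℝ → ℝ} (h : ∀ m : ℕ, f₁ (x + m * w) = f₂ (x + m * w)) :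
    ∀ (j m : ℕ), ((fdiff w)^[j] f₁) (x + m * w) = ((fdiff w)^[j] f₂) (x + m * w) := by
  intro j
  induction j with
  | zero => simpa using h
  | succ j IH =>
    intro m
    rw [Function.iterate_succ_apply', Function.iterate_succ_apply']
    show ((fdiff w)^[j] f₁) (x + m * w + w) - ((fdiff w)^[j] f₁) (x + m * w)
       = ((fdiff w)^[j] f₂) (x + m * w + w) - ((fdiff w)^[j] f₂) (x + m * w)
    have e : x + m * w + w = x + ((m + 1 : ℕ) : ℝ) * w := by push_cast; ring
    rw [e, IH (m+1), IH m]


open Polynomial in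
lemma homog {n : ℕ} {f : ℝ → ℝ} (hf : IsMonomial n f) {h : ℝ} (hh : h ≠ 0) (q : ℚ) :
    f ((q : ℝ) * h) = (q : ℝ) ^ n * f h := by
  have hz : ∀ v x, ((fdiff v)^[n+1] f) x = 0 := diff_zero hf
  set P₀ := interp n f 0 h with hP₀def
  have hP₀ : ∀ r : ℚ, f ((r : ℝ) * h) = P₀.eval (r : ℝ) := by
    intro r
    have := interp_eval_rat n f hz 0 h r
    rwa [zero_add] at this
  set R : Polynomial ℝ := P₀.comp (C h⁻¹ * X) with hRdef
  have hRdeg : R.natDegree ≤ n := by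
    rw [hRdef, natDegree_comp, natDegree_C_mul_X _ (inv_ne_zero hh), mul_one]
    exact interp_natDegree_le n f 0 h
  have key : ∀ r : ℚ, f ((r : ℝ) * h) = R.coeff n * ((r : ℝ) * h) ^ n := by
    intro r
    have hagree : ∀ m : ℕ, f (0 + m * ((r : ℝ) * h)) = (fun t => R.eval t) (0 + m * ((r : ℝ) * h)) := by
      intro m
      have e1 : (0 : ℝ) + m * ((r : ℝ) * h) = (((m * r : ℚ) : ℝ)) * h := by push_cast; ring
      rw [e1, hP₀ (m * r)]
      show _ = R.eval _
      rw [hRdef, eval_comp, eval_mul, eval_C, eval_X]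
      congr 1
      push_cast
      field_simp
    have := iter_agree (w := (r:ℝ)*h) (x := 0) (f₁ := f) (f₂ := fun t => R.eval t) hagree n 0
    simp only [Nat.cast_zero, zero_mul, add_zero, zero_add] at this
    have h1 := iter_eq hf ((r : ℝ) * h) 0
    rw [this] at h1
    have h2 := polyD n R hRdeg ((r : ℝ) * h) 0
    rw [h2] at h1
    have hn : (n.factorial : ℝ) ≠ 0 := Nat.cast_ne_zero.mpr n.factorial_ne_zero
    apply mul_left_cancel₀ hn
    rw [← h1]
    ring
  have k1 := key 1
  have kq := key q
  simp only [Rat.cast_one, one_mul] at k1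
  rw [kq, k1, mul_pow]
  ring


theorem stmt7 (n : ℕ) (f : ℝ → ℝ) (hf : IsMonomial n f) (hdisc : ¬ Continuous f)
    (h₀ h₁ : ℝ) (hh₀ : h₀ ≠ 0) (hh₁ : h₁ ≠ 0)
    (hA : f h₀ / h₀ ^ n ≠ f h₁ / h₁ ^ n) (x y : ℝ)
    (hy : y ∈ Set.Icc (min (f h₀ / h₀ ^ n * x ^ n) (f h₁ / h₁ ^ n * x ^ n))
                      (max (f h₀ / h₀ ^ n * x ^ n) (f h₁ / h₁ ^ n * x ^ n))) :
    (x, y) ∈ closure {p : ℝ × ℝ | p.2 = f p.1} := by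
  have hz : ∀ v x, ((fdiff v)^[n+1] f) x = 0 := diff_zero hf
  set E₀ : ℝ := f h₀ / h₀ ^ n * x ^ n with hE₀
  set E₁ : ℝ := f h₁ / h₁ ^ n * x ^ n with hE₁
  rw [Metric.mem_closure_iff]
  intro ε hε
  set ε' : ℝ := ε / 3 with hε'def
  have hε' : 0 < ε' := by positivity
  -- choose rationals r₀ r₁
  have hpick : ∀ h : ℝ, h ≠ 0 → ∀ E : ℝ, f h / h ^ n * x ^ n = E →
      ∃ r : ℚ, |(r : ℝ) * h - x| < ε' ∧ |(r : ℝ) ^ n * f h - E| < ε' := by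
    intro h hh E hEdef
    have hcont : Continuous fun t : ℝ => (|t * h - x|, |t ^ n * f h - E|) := by
      fun_prop
    have hU : IsOpen {t : ℝ | |t * h - x| < ε' ∧ |t ^ n * f h - E| < ε'} :=
      IsOpen.and (isOpen_lt (by fun_prop) continuous_const)
        (isOpen_lt (by fun_prop) continuous_const)
    have hmem : (x / h) ∈ {t : ℝ | |t * h - x| < ε' ∧ |t ^ n * f h - E| < ε'} := by
      refine ⟨?_, ?_⟩
      · show |x / h * h - x| < ε'
        rw [div_mul_cancel₀ _ hh]
        simpa using hε'
      · show |(x / h) ^ n * f h - E| < ε'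
        have : (x / h) ^ n * f h = E := by
          rw [← hEdef, div_pow]
          field_simp
        rw [this]
        simpa using hε'
    obtain ⟨r, hr⟩ := Rat.denseRange_cast.exists_mem_open hU ⟨_, hmem⟩
    exact ⟨r, hr.1, hr.2⟩
  obtain ⟨r₀, hr₀x, hr₀v⟩ := hpick h₀ hh₀ E₀ rfl
  obtain ⟨r₁, hr₁x, hr₁v⟩ := hpick h₁ hh₁ E₁ rfl
  set u : ℝ := (r₀ : ℝ) * h₀ with hu
  set v : ℝ := (r₁ : ℝ) * h₁ - u with hv
  set P : Polynomial ℝ := interp n f u v with hP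
  have hPq : ∀ q : ℚ, f (u + (q : ℝ) * v) = P.eval (q : ℝ) := interp_eval_rat n f hz u v
  have hP0 : P.eval 0 = (r₀ : ℝ) ^ n * f h₀ := by
    have := hPq 0
    simp only [Rat.cast_zero, zero_mul, add_zero] at this
    rw [← this, hu, homog hf hh₀ r₀]
  have hP1 : P.eval 1 = (r₁ : ℝ) ^ n * f h₁ := by
    have := hPq 1
    simp only [Rat.cast_one, one_mul] at this
    rw [← this, hv]
    rw [show u + ((r₁:ℝ) * h₁ - u) = (r₁:ℝ) * h₁ by ring, homog hf hh₁ r₁]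
  have hP0E : |P.eval 0 - E₀| < ε' := by rw [hP0]; exact hr₀v
  have hP1E : |P.eval 1 - E₁| < ε' := by rw [hP1]; exact hr₁v
  -- clamp y
  set m : ℝ := min (P.eval 0) (P.eval 1) with hm
  set M : ℝ := max (P.eval 0) (P.eval 1) with hM
  have hmM : m ≤ M := min_le_max
  set y' : ℝ := max m (min y M) with hy'
  have habs0 := abs_lt.mp hP0E
  have habs1 := abs_lt.mp hP1E
  have hmy : m ≤ y + ε' := by
    have h1 : m ≤ P.eval 0 := min_le_left _ _
    have h2 : m ≤ P.eval 1 := min_le_right _ _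
    have h3 : min E₀ E₁ ≤ y := hy.1
    rcases le_total E₀ E₁ with hE | hE
    · rw [min_eq_left hE] at h3; linarith
    · rw [min_eq_right hE] at h3; linarith
  have hMy : y ≤ M + ε' := by
    have h1 : P.eval 0 ≤ M := le_max_left _ _
    have h2 : P.eval 1 ≤ M := le_max_right _ _
    have h3 : y ≤ max E₀ E₁ := hy.2
    rcases le_total E₀ E₁ with hE | hE
    · rw [max_eq_right hE] at h3; linarith
    · rw [max_eq_left hE] at h3; linarith
  have hy'm : m ≤ y' := le_max_left _ _
  have hy'M : y' ≤ M := max_le hmM (min_le_right _ _)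
  have hy'y : |y' - y| ≤ ε' := by
    rcases le_total y m with h1 | h1
    · rw [hy', min_eq_left (h1.trans hmM), max_eq_left h1, abs_le]
      constructor <;> linarith
    · rcases le_total y M with h2 | h2
      · rw [hy', min_eq_left h2, max_eq_right h1]
        simpa using hε'.le
      · rw [hy', min_eq_right h2, max_eq_right hmM, abs_le]
        constructor <;> linarith
  -- IVT
  have hy'uIcc : y' ∈ Set.uIcc (P.eval 0) (P.eval 1) := by
    rw [Set.uIcc]
    exact ⟨hy'm, hy'M⟩
  obtain ⟨lam, hlamIn, hlamEq⟩ :=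
    intermediate_value_uIcc (Continuous.continuousOn (P.continuous)) hy'uIcc
  rw [Set.uIcc_of_le (zero_le_one : (0:ℝ) ≤ 1)] at hlamIn
  obtain ⟨hlam0, hlam1⟩ := hlamIn
  -- pick rational near lam
  have hV : IsOpen {t : ℝ | |u + t * v - (u + lam * v)| < ε' ∧ |P.eval t - y'| < ε'} :=
    IsOpen.and (isOpen_lt (by fun_prop) continuous_const)
      (isOpen_lt ((P.continuous.sub continuous_const).abs) continuous_const)
  have hVmem : lam ∈ {t : ℝ | |u + t * v - (u + lam * v)| < ε' ∧ |P.eval t - y'| < ε'} := by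
    constructor
    · simp only [Set.mem_setOf_eq, sub_self, abs_zero]; exact hε'
    · simp only [Set.mem_setOf_eq, hlamEq, sub_self, abs_zero]; exact hε'
  obtain ⟨qq, hqq1, hqq2⟩ := Rat.denseRange_cast.exists_mem_open hV ⟨_, hVmem⟩
  refine ⟨(u + (qq : ℝ) * v, f (u + (qq : ℝ) * v)), by simp [Set.mem_setOf_eq], ?_⟩
  rw [Prod.dist_eq]
  have hcoord1 : dist x (u + (qq : ℝ) * v) < ε := by
    rw [Real.dist_eq]
    have hmid : |u + lam * v - x| ≤ ε' := by
      have he : u + lam * v - x = (1 - lam) * (u - x) + lam * ((r₁:ℝ) * h₁ - x) := by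
        rw [hv]; ring
      rw [he]
      calc |(1 - lam) * (u - x) + lam * ((r₁:ℝ) * h₁ - x)|
          ≤ |(1 - lam) * (u - x)| + |lam * ((r₁:ℝ) * h₁ - x)| := abs_add_le _ _
        _ = (1 - lam) * |u - x| + lam * |(r₁:ℝ) * h₁ - x| := by
            rw [abs_mul, abs_mul, abs_of_nonneg (by linarith), abs_of_nonneg hlam0]
        _ ≤ (1 - lam) * ε' + lam * ε' := by
            have g0 : |u - x| ≤ ε' := by rw [hu]; exact hr₀x.le
            have g1 : |(r₁:ℝ) * h₁ - x| ≤ ε' := hr₁x.le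
            have := abs_nonneg (u - x)
            have := abs_nonneg ((r₁:ℝ) * h₁ - x)
            nlinarith
        _ = ε' := by ring
    have h2 : |x - (u + (qq : ℝ) * v)| ≤ |u + (qq:ℝ) * v - (u + lam * v)| + |u + lam * v - x| := by
      rw [show x - (u + (qq : ℝ) * v) = -((u + (qq:ℝ)*v - (u + lam*v)) + (u + lam*v - x)) by ring,
        abs_neg]
      exact abs_add_le _ _
    rw [hε'def] at *
    linarith
  have hcoord2 : dist y (f (u + (qq : ℝ) * v)) < ε := by
    rw [Real.dist_eq, hPq qq]
    have h2 : |y - P.eval (qq : ℝ)| ≤ |P.eval (qq : ℝ) - y'| + |y' - y| := by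
      rw [show y - P.eval (qq:ℝ) = -((P.eval (qq:ℝ) - y') + (y' - y)) by ring, abs_neg]
      exact abs_add_le _ _
    rw [hε'def] at *
    linarith
  exact max_lt hcoord1 hcoord2
end

section
/- If f : ℝ → ℝ is additive and there exist nonzero reals h, s with f(h)/h ≠ f(s)/s, then the set {f(t)/t : t ≠ 0} is unbounded above and unbounded below. -/
lemma aux_pos (s c r : ℝ) (hs : s ≠ 0) (hc : 0 < c) (K : ℝ) :
    ∃ q : ℚ, s * (r - q) ≠ 0 ∧ K < c / (s * (r - q)) := by
  set K₀ := max K 1 with hK₀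
  have hK₀pos : (0:ℝ) < K₀ := lt_of_lt_of_le one_pos (le_max_right _ _)
  set d := c / K₀ with hd
  have hdpos : 0 < d := div_pos hc hK₀pos
  have hds : d / s * s = d := div_mul_cancel₀ d hs
  obtain ⟨q, hu0, hu1⟩ : ∃ q : ℚ, 0 < s * (r - q) ∧ s * (r - q) < d := by
    rcases hs.lt_or_gt with hneg | hpos
    · have hdsneg : d / s < 0 := div_neg_of_pos_of_neg hdpos hneg
      obtain ⟨q, hq1, hq2⟩ := exists_rat_btwn (show r < r - d / s by linarith)
      refine ⟨q, ?_, ?_⟩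
      · nlinarith
      · nlinarith
    · have hdspos : 0 < d / s := div_pos hdpos hpos
      obtain ⟨q, hq1, hq2⟩ := exists_rat_btwn (show r - d / s < r by linarith)
      refine ⟨q, ?_, ?_⟩
      · nlinarith
      · nlinarith
  refine ⟨q, ne_of_gt hu0, ?_⟩
  have h1 : K₀ < c / (s * (r - q)) := by
    rw [lt_div_iff₀ hu0]
    have : s * (r - q) * K₀ < d * K₀ := by nlinarith
    rw [hd, div_mul_cancel₀ c (ne_of_gt hK₀pos)] at this
    linarith
  exact lt_of_le_of_lt (le_max_left _ _) h1

theorem stmt9 (f : ℝ → ℝ) (hadd : ∀ x y : ℝ, f (x + y) = f x + f y)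
    (h s : ℝ) (hh : h ≠ 0) (hs : s ≠ 0) (hne : f h / h ≠ f s / s) :
    ¬ BddAbove {y : ℝ | ∃ t : ℝ, t ≠ 0 ∧ y = f t / t} ∧
    ¬ BddBelow {y : ℝ | ∃ t : ℝ, t ≠ 0 ∧ y = f t / t} := by
  have hf0 : f 0 = 0 := by have := hadd 0 0; simpa using this
  set F : ℝ →+ ℝ := AddMonoidHom.mk' f hadd with hF
  have hrat : ∀ (q : ℚ) (x : ℝ), f ((q:ℝ) * x) = q * f x := by
    intro q x
    have := map_ratCast_smul F ℝ ℝ q x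
    simpa [smul_eq_mul, hF] using this
  set r : ℝ := h / s with hr
  set B : ℝ := f s / s with hB
  set c : ℝ := f h - r * f s with hc
  have hcne : c ≠ 0 := by
    intro h0
    apply hne
    have h2 : f h * s = h * f s := by
      rw [hc, hr] at h0
      have := sub_eq_zero.mp h0
      field_simp at this
      linarith
    rw [hB, div_eq_div_iff hh hs]
    linear_combination h2
  -- for any rational q with t := h - q*s ≠ 0, f t / t = B + c / t
  have hval : ∀ q : ℚ, h - (q:ℝ) * s ≠ 0 → f (h - (q:ℝ) * s) / (h - (q:ℝ) * s)
      = B + c / (h - (q:ℝ) * s) := by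
    intro q ht
    have hft : f (h - (q:ℝ) * s) = f h - (q:ℝ) * f s := by
      have h1 : f (h + (-q : ℚ) * s) = f h + f ((-q : ℚ) * s) := hadd _ _
      have h2 : f ((-q : ℚ) * s) = (-q : ℚ) * f s := hrat (-q) s
      push_cast at h1 h2 ⊢
      rw [show h - (q:ℝ) * s = h + (-(q:ℝ)) * s by ring, h1, h2]
      ring
    rw [hft, hB, hc, hr]
    field_simp
    ring
  have key : ∀ (K : ℝ), ∃ t : ℝ, t ≠ 0 ∧ f t / t = B + c / t ∧ K < c / t := by
    intro K
    rcases hcne.lt_or_gt with hcn | hcp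
    · obtain ⟨q, hu, hK⟩ := aux_pos (-s) (-c) r (neg_ne_zero.2 hs) (by linarith) K
      have heq : -s * (r - q) = -(h - (q:ℝ) * s) := by rw [hr]; field_simp
      rw [heq] at hu hK
      have ht : h - (q:ℝ) * s ≠ 0 := fun h0 => hu (by rw [h0]; ring)
      refine ⟨h - (q:ℝ) * s, ht, hval q ht, ?_⟩
      rwa [neg_div_neg_eq] at hK
    · obtain ⟨q, hu, hK⟩ := aux_pos s c r hs hcp K
      have heq : s * (r - q) = h - (q:ℝ) * s := by rw [hr]; field_simp
      rw [heq] at hu hK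
      exact ⟨h - (q:ℝ) * s, hu, hval q hu, hK⟩
  have keyneg : ∀ (K : ℝ), ∃ t : ℝ, t ≠ 0 ∧ f t / t = B + c / t ∧ c / t < K := by
    intro K
    rcases hcne.lt_or_gt with hcn | hcp
    · obtain ⟨q, hu, hK⟩ := aux_pos s (-c) r hs (by linarith) (-K)
      have heq : s * (r - q) = h - (q:ℝ) * s := by rw [hr]; field_simp
      rw [heq] at hu hK
      refine ⟨h - (q:ℝ) * s, hu, hval q hu, ?_⟩
      rw [neg_div] at hK; linarith
    · obtain ⟨q, hu, hK⟩ := aux_pos (-s) c r (neg_ne_zero.2 hs) hcp (-K)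
      have heq : -s * (r - q) = -(h - (q:ℝ) * s) := by rw [hr]; field_simp
      rw [heq] at hu hK
      have ht : h - (q:ℝ) * s ≠ 0 := fun h0 => hu (by rw [h0]; ring)
      refine ⟨h - (q:ℝ) * s, ht, hval q ht, ?_⟩
      rw [div_neg] at hK; linarith
  constructor
  · rintro ⟨M, hM⟩
    obtain ⟨t, ht, heq, hlt⟩ := key (M - B)
    have : f t / t ≤ M := hM ⟨t, ht, rfl⟩
    rw [heq] at this; linarith
  · rintro ⟨M, hM⟩
    obtain ⟨t, ht, heq, hlt⟩ := keyneg (M - B)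
    have : M ≤ f t / t := hM ⟨t, ht, rfl⟩
    rw [heq] at this; linarith
end

section
/- If f₁ is an n₁-monomial and f₂ is an n₂-monomial (fᵢ : ℝ → ℝ), then the product f₁·f₂ is an (n₁+n₂)-monomial. -/
lemma fdiff_iter_succ_apply (h : ℝ) (f : ℝ → ℝ) (n : ℕ) (x : ℝ) :
    (fdiff h)^[n + 1] f x = (fdiff h)^[n] f (x + h) - (fdiff h)^[n] f x := by
  rw [Function.iterate_succ_apply']; rfl

/-- Leibniz rule for iterated forward differences. -/
lemma fdiff_iter_mul (h : ℝ) (f g : ℝ → ℝ) (N : ℕ) (x : ℝ) :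
    (fdiff h)^[N] (fun y => f y * g y) x =
      ∑ k ∈ Finset.range (N + 1),
        (N.choose k : ℝ) * ((fdiff h)^[k] f x) * ((fdiff h)^[N - k] g (x + k * h)) := by
  induction N generalizing x with
  | zero => simp
  | succ N ih =>
    rw [fdiff_iter_succ_apply, ih, ih, ← Finset.sum_sub_distrib]
    have key : ∀ k ∈ Finset.range (N + 1),
        (N.choose k : ℝ) * ((fdiff h)^[k] f (x + h)) * ((fdiff h)^[N - k] g (x + h + k * h))
          - (N.choose k : ℝ) * ((fdiff h)^[k] f x) * ((fdiff h)^[N - k] g (x + k * h))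
        = ((N.choose k : ℝ) * ((fdiff h)^[k + 1] f x) *
              ((fdiff h)^[N - k] g (x + (k + 1) * h)))
          + ((N.choose k : ℝ) * ((fdiff h)^[k] f x) *
              ((fdiff h)^[(N + 1) - k] g (x + k * h))) := by
      intro k hk
      rw [Finset.mem_range] at hk
      have hNk : N - k + 1 = N + 1 - k := by omega
      rw [fdiff_iter_succ_apply, ← hNk, fdiff_iter_succ_apply]
      have harg : x + h + (k : ℝ) * h = x + ((k : ℝ) + 1) * h := by ring
      have harg2 : x + (k : ℝ) * h + h = x + h + (k : ℝ) * h := by ring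
      rw [harg2, harg]
      ring
    rw [Finset.sum_congr rfl key, Finset.sum_add_distrib]
    -- reindex the first sum
    have reindex : ∑ k ∈ Finset.range (N + 1),
        (N.choose k : ℝ) * ((fdiff h)^[k + 1] f x) * ((fdiff h)^[N - k] g (x + (k + 1) * h))
        = ∑ k ∈ Finset.range (N + 2),
          (if k = 0 then 0 else (N.choose (k - 1) : ℝ)) *
            ((fdiff h)^[k] f x) * ((fdiff h)^[(N + 1) - k] g (x + k * h)) := by
      conv_rhs => rw [Finset.sum_range_succ']
      simp only [reduceIte, zero_mul, add_zero]
      apply Finset.sum_congr rfl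
      intro k hk
      have : (k + 1 : ℕ) ≠ 0 := Nat.succ_ne_zero k
      rw [if_neg this]
      have h1 : (k + 1) - 1 = k := rfl
      have h2 : (N + 1) - (k + 1) = N - k := by omega
      rw [h1, h2]
      push_cast
      ring_nf
    have extend : ∑ k ∈ Finset.range (N + 1),
        (N.choose k : ℝ) * ((fdiff h)^[k] f x) * ((fdiff h)^[(N + 1) - k] g (x + k * h))
        = ∑ k ∈ Finset.range (N + 2),
          (if k = N + 1 then 0 else (N.choose k : ℝ)) *
            ((fdiff h)^[k] f x) * ((fdiff h)^[(N + 1) - k] g (x + k * h)) := by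
      conv_rhs => rw [Finset.sum_range_succ]
      rw [if_pos rfl, zero_mul, zero_mul, add_zero]
      apply Finset.sum_congr rfl
      intro k hk
      rw [Finset.mem_range] at hk
      rw [if_neg (by omega)]
    rw [reindex, extend, ← Finset.sum_add_distrib]
    apply Finset.sum_congr rfl
    intro k hk
    rw [Finset.mem_range] at hk
    have hch : ((N + 1).choose k : ℝ) =
        (if k = 0 then 0 else (N.choose (k - 1) : ℝ)) +
        (if k = N + 1 then 0 else (N.choose k : ℝ)) := by
      by_cases hk0 : k = 0
      · subst hk0; simp
      · rw [if_neg hk0]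
        by_cases hkN : k = N + 1
        · subst hkN
          simp [Nat.choose_succ_self_right, Nat.choose_self]
        · rw [if_neg hkN]
          obtain ⟨j, rfl⟩ : ∃ j, k = j + 1 := ⟨k - 1, by omega⟩
          have h1 : (j + 1) - 1 = j := rfl
          rw [h1, ← Nat.cast_add, Nat.choose_succ_succ]
    rw [hch]; ring

lemma iter_eq_of_isMonomial {n : ℕ} {f : ℝ → ℝ} (hf : IsMonomial n f) (x h : ℝ) :
    (fdiff h)^[n] f x = (n.factorial : ℝ) * f h := by
  have := hf x h
  have hne : (n.factorial : ℝ) ≠ 0 := Nat.cast_ne_zero.mpr n.factorial_ne_zero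
  field_simp at this
  linarith [this]

lemma iter_eq_zero_of_isMonomial {n : ℕ} {f : ℝ → ℝ} (hf : IsMonomial n f) {k : ℕ}
    (hk : n < k) (x h : ℝ) : (fdiff h)^[k] f x = 0 := by
  have hz : (fdiff h)^[n + 1] f = fun _ => 0 := by
    funext y
    rw [fdiff_iter_succ_apply, iter_eq_of_isMonomial hf, iter_eq_of_isMonomial hf, sub_self]
  have hfix : fdiff h (fun _ => (0 : ℝ)) = fun _ => 0 := by
    funext y; simp [fdiff]
  obtain ⟨m, rfl⟩ : ∃ m, k = m + (n + 1) := ⟨k - (n + 1), by omega⟩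
  rw [Function.iterate_add_apply, hz, Function.iterate_fixed hfix]

theorem stmt11 (n₁ n₂ : ℕ) (f₁ f₂ : ℝ → ℝ)
    (h₁ : IsMonomial n₁ f₁) (h₂ : IsMonomial n₂ f₂) :
    IsMonomial (n₁ + n₂) (fun x => f₁ x * f₂ x) := by
  intro x h
  rw [fdiff_iter_mul]
  rw [Finset.sum_eq_single n₁]
  · rw [iter_eq_of_isMonomial h₁]
    have hsub : n₁ + n₂ - n₁ = n₂ := by omega
    rw [hsub, iter_eq_of_isMonomial h₂]
    have hfact : ((n₁ + n₂).choose n₁ : ℝ) * (n₁.factorial : ℝ) * (n₂.factorial : ℝ)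
        = ((n₁ + n₂).factorial : ℝ) := by
      have := Nat.choose_mul_factorial_mul_factorial (Nat.le_add_right n₁ n₂)
      rw [Nat.add_sub_cancel_left] at this
      exact_mod_cast congrArg (Nat.cast : ℕ → ℝ) this
    have hne : ((n₁ + n₂).factorial : ℝ) ≠ 0 := Nat.cast_ne_zero.mpr (n₁ + n₂).factorial_ne_zero
    field_simp
    rw [← hfact]
    ring
  · intro k hk hkne
    rw [Finset.mem_range] at hk
    rcases lt_or_gt_of_ne hkne with hlt | hgt
    · have : n₂ < n₁ + n₂ - k := by omega
      rw [iter_eq_zero_of_isMonomial h₂ this, mul_zero]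
    · rw [iter_eq_zero_of_isMonomial h₁ hgt, mul_zero, zero_mul]
  · intro hmem
    exact absurd (Finset.mem_range.mpr (by omega)) hmem
end

section
/- Let f be a discontinuous n-monomial and set A(h) = f(h)/h^n for h ≠ 0. If sup_{h ≠ 0} A(h) = +∞ and inf_{h ≠ 0} A(h) = -∞, then the closure of the graph of f is all of ℝ². -/
open Finset Function fwdDiff Polynomial

section Aux

variable {n : ℕ} {f : ℝ → ℝ} (hf : IsMonomial n f)

include hf in
private lemma iter_n' (x h : ℝ) : (fwdDiff h)^[n] f x = (n.factorial : ℝ) * f h := by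
  have := hf x h
  have h0 : (n.factorial : ℝ) ≠ 0 := Nat.cast_ne_zero.2 n.factorial_ne_zero
  field_simp at this
  rw [show ((fwdDiff h)^[n] f x) = (fdiff h)^[n] f x from rfl, this, mul_comm]

private lemma iter_zero_fn' (h : ℝ) (m : ℕ) :
    (fwdDiff h)^[m] (fun _ => (0:ℝ)) = fun _ => 0 := by
  induction m with
  | zero => rfl
  | succ k ih => rw [Function.iterate_succ_apply', ih, fwdDiff_const]

include hf in
private lemma iter_gt' {j : ℕ} (hj : n < j) (x h : ℝ) : (fwdDiff h)^[j] f x = 0 := by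
  have hz : (fwdDiff h)^[n+1] f = fun _ => 0 := by
    funext y
    rw [Function.iterate_succ_apply', fwdDiff, iter_n' hf, iter_n' hf, sub_self]
  obtain ⟨m, rfl⟩ := Nat.exists_eq_add_of_lt hj
  rw [show n + m + 1 = m + (n+1) by omega, Function.iterate_add_apply, hz, iter_zero_fn']

include hf in
private lemma newton' (u d : ℝ) (k : ℕ) :
    f (u + (k:ℝ) * d) = ∑ j ∈ range (n+1), (k.choose j : ℝ) * (fwdDiff d)^[j] f u := by
  have H := shift_eq_sum_fwdDiff_iter d f k u
  rw [nsmul_eq_mul] at H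
  set N := max k n with hN
  have h1 : f (u + (k:ℝ) * d) = ∑ j ∈ range (N+1), (k.choose j : ℝ) * (fwdDiff d)^[j] f u := by
    rw [H, Finset.sum_subset (Finset.range_subset_range.2 (by omega : k+1 ≤ N+1))]
    · exact Finset.sum_congr rfl fun j _ => by rw [nsmul_eq_mul]
    · intro j _ hj
      simp only [mem_range, not_lt] at hj
      rw [Nat.choose_eq_zero_of_lt (by omega), zero_smul]
  rw [h1, Finset.sum_subset (Finset.range_subset_range.2 (by omega : n+1 ≤ N+1))]
  intro j _ hj
  simp only [mem_range, not_lt] at hj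
  rw [iter_gt' hf (by omega), mul_zero]

include hf in
private lemma poly_lemma' (u d : ℝ) :
    ∃ P : Polynomial ℝ, ∀ t : ℚ, 0 ≤ t → P.eval (t:ℝ) = f (u + (t:ℝ) * d) := by
  set Pq : ℕ → Polynomial ℝ := fun q =>
    ∑ j ∈ range (n+1), C ((fwdDiff (d/q))^[j] f u / j.factorial) *
      ((descPochhammer ℝ j).comp (C (q:ℝ) * X)) with hPq
  have heval : ∀ q : ℕ, q ≠ 0 → ∀ k : ℕ,
      (Pq q).eval ((k:ℝ)/q) = f (u + ((k:ℝ)/q) * d) := by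
    intro q hq k
    have hq' : (q:ℝ) ≠ 0 := Nat.cast_ne_zero.2 hq
    have e1 : ((k:ℝ)/q) * d = (k:ℝ) * (d/q) := by field_simp
    rw [e1, newton' hf u (d/q) k, hPq]
    rw [eval_finset_sum]
    apply Finset.sum_congr rfl
    intro j _
    rw [eval_mul, eval_C, eval_comp, eval_mul, eval_C, eval_X,
      mul_div_cancel₀ _ hq', descPochhammer_eval_eq_descFactorial,
      Nat.descFactorial_eq_factorial_mul_choose, Nat.cast_mul]
    have : (j.factorial : ℝ) ≠ 0 := Nat.cast_ne_zero.2 j.factorial_ne_zero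
    field_simp
  have hPeq : ∀ q : ℕ, q ≠ 0 → Pq q = Pq 1 := by
    intro q hq
    apply Polynomial.eq_of_infinite_eval_eq
    apply Set.Infinite.mono (s := Set.range (fun m : ℕ => (m:ℝ)))
    · rintro x ⟨m, rfl⟩
      have hq' : (q:ℝ) ≠ 0 := Nat.cast_ne_zero.2 hq
      have A := heval q hq (m*q)
      have B := heval 1 one_ne_zero m
      have hcast : ((m*q : ℕ):ℝ)/(q:ℝ) = (m:ℝ) := by push_cast; field_simp
      have hcast2 : ((m:ℕ):ℝ)/((1:ℕ):ℝ) = (m:ℝ) := by norm_num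
      rw [hcast] at A
      rw [hcast2] at B
      simp only [Set.mem_setOf_eq]
      rw [A, B]
    · exact Set.infinite_range_of_injective Nat.cast_injective
  refine ⟨Pq 1, fun t ht => ?_⟩
  have hk : ((t.num.toNat : ℝ))/(t.den : ℝ) = (t : ℝ) := by
    rw [Rat.cast_def]
    congr 1
    exact_mod_cast Int.toNat_of_nonneg (Rat.num_nonneg.2 ht)
  rw [← hk, ← heval t.den t.den_nz t.num.toNat, hPeq t.den t.den_nz]

private lemma fwdDiff_shift' (h c : ℝ) (g : ℝ → ℝ) :
    fwdDiff h (fun y => g (y + c)) = fun x => fwdDiff h g (x + c) := by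
  funext x; simp only [fwdDiff]; rw [add_right_comm]

private lemma fwdDiff_iter_shift' (h c : ℝ) (g : ℝ → ℝ) (m : ℕ) :
    (fwdDiff h)^[m] (fun y => g (y + c)) = fun x => (fwdDiff h)^[m] g (x + c) := by
  induction m generalizing g with
  | zero => rfl
  | succ k ih =>
    rw [Function.iterate_succ_apply, fwdDiff_shift', ih]
    funext x
    rw [Function.iterate_succ_apply]

private lemma fwdDiff_nsmul_step' (h : ℝ) (g : ℝ → ℝ) (m : ℕ) (x : ℝ) :
    fwdDiff ((m:ℝ) * h) g x = ∑ i ∈ range m, fwdDiff h g (x + (i:ℝ) * h) := by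
  induction m with
  | zero => simp [fwdDiff]
  | succ k ih =>
    rw [sum_range_succ, ← ih]
    simp only [fwdDiff]
    push_cast
    ring_nf

private lemma fwdDiff_iter_const_of_const' (h : ℝ) (g : ℝ → ℝ) (c : ℝ) (n : ℕ)
    (hg : ∀ x, (fwdDiff h)^[n] g x = c) (m : ℕ) :
    ∀ x, (fwdDiff ((m:ℝ) * h))^[n] g x = (m:ℝ)^n * c := by
  induction n generalizing g c with
  | zero => intro x; simpa using hg x
  | succ k ih =>
    intro x
    rw [Function.iterate_succ_apply]
    have hsum : fwdDiff ((m:ℝ)*h) g = ∑ i ∈ range m, (fun y => fwdDiff h g (y + (i:ℝ)*h)) := by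
      funext y
      rw [fwdDiff_nsmul_step']
      simp
    rw [hsum, fwdDiff_iter_finset_sum]
    have : ∀ i ∈ range m, ((fwdDiff ((m:ℝ)*h))^[k] (fun y => fwdDiff h g (y + (i:ℝ)*h))) x
        = (m:ℝ)^k * c := by
      intro i _
      apply ih (fun y => fwdDiff h g (y + (i:ℝ)*h)) c
      intro y
      rw [show (fun y => fwdDiff h g (y + (i:ℝ)*h))
          = (fun y => (fwdDiff h g) (y + (i:ℝ)*h)) from rfl, fwdDiff_iter_shift']
      rw [← Function.iterate_succ_apply]
      exact hg _
    rw [Finset.sum_apply, Finset.sum_congr rfl this, Finset.sum_const, card_range, nsmul_eq_mul]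
    ring

include hf in
private lemma nat_scale' (m : ℕ) (h : ℝ) : f ((m:ℝ) * h) = (m:ℝ)^n * f h := by
  have h0 : (n.factorial : ℝ) ≠ 0 := Nat.cast_ne_zero.2 n.factorial_ne_zero
  have H := fwdDiff_iter_const_of_const' h f ((n.factorial:ℝ) * f h) n
    (fun x => iter_n' hf x h) m 0
  rw [iter_n' hf 0 ((m:ℝ) * h)] at H
  exact mul_left_cancel₀ h0 (by linear_combination H)

private lemma fwdDiff_iter_neg_step' (h : ℝ) (g : ℝ → ℝ) (m : ℕ) (x : ℝ) :
    (fwdDiff (-h))^[m] g x = (-1:ℝ)^m * (fwdDiff h)^[m] g (x - (m:ℝ)*h) := by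
  induction m generalizing x with
  | zero => simp
  | succ k ih =>
    rw [Function.iterate_succ_apply', fwdDiff, ih, ih,
      Function.iterate_succ_apply', fwdDiff]
    push_cast
    ring_nf

include hf in
private lemma neg_val' (h : ℝ) : f (-h) = (-1:ℝ)^n * f h := by
  have h0 : (n.factorial : ℝ) ≠ 0 := Nat.cast_ne_zero.2 n.factorial_ne_zero
  have H := fwdDiff_iter_neg_step' h f n 0
  rw [iter_n' hf 0 (-h), iter_n' hf (0 - (n:ℝ)*h) h] at H
  exact mul_left_cancel₀ h0 (by linear_combination H)

include hf in
private lemma rat_scale' (r : ℚ) (h : ℝ) : f ((r:ℝ) * h) = (r:ℝ)^n * f h := by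
  have key : ∀ s : ℚ, 0 ≤ s → f ((s:ℝ) * h) = (s:ℝ)^n * f h := by
    intro s hs
    have hd : ((s.den : ℕ):ℝ) ≠ 0 := Nat.cast_ne_zero.2 s.den_nz
    have hnum : ((s.num.toNat : ℕ):ℝ) = ((s.num:ℝ)) := by
      exact_mod_cast congrArg (Int.cast : ℤ → ℝ) (Int.toNat_of_nonneg (Rat.num_nonneg.2 hs))
    have e1 : f ((s.den:ℝ) * ((s:ℝ) * h)) = (s.den:ℝ)^n * f ((s:ℝ)*h) := nat_scale' hf s.den _
    have e2 : (s.den:ℝ) * ((s:ℝ) * h) = (s.num.toNat : ℕ) * h := by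
      rw [hnum, Rat.cast_def]; field_simp
    rw [e2, nat_scale' hf s.num.toNat h, hnum] at e1
    have e3 : ((s.num:ℝ))^n = (s:ℝ)^n * (s.den:ℝ)^n := by
      rw [Rat.cast_def, div_pow, div_mul_cancel₀ _ (pow_ne_zero _ hd)]
    rw [e3] at e1
    have hdn : (s.den:ℝ)^n ≠ 0 := pow_ne_zero _ hd
    exact mul_left_cancel₀ hdn (by linear_combination -e1)
  rcases le_or_gt 0 r with hr | hr
  · exact key r hr
  · have h1 : ((r:ℝ) * h) = -((((-r):ℚ):ℝ) * h) := by push_cast; ring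
    rw [h1, neg_val' hf, key (-r) (by linarith), ← mul_assoc, ← mul_pow]
    push_cast
    ring

private lemma rat_mul_dense (w x₁ : ℝ) (hw : w ≠ 0) (hx : x₁ ≠ 0) {δ : ℝ} (hδ : 0 < δ) :
    ∃ r : ℚ, (r:ℝ) ≠ 0 ∧ |(r:ℝ) * w - x₁| < δ := by
  set τ := x₁ / w with hτdef
  have hτ : τ ≠ 0 := div_ne_zero hx hw
  have hwa : 0 < |w| := abs_pos.2 hw
  set ρ := min (δ / |w|) |τ| with hρdef
  have hρ : 0 < ρ := lt_min (div_pos hδ hwa) (abs_pos.2 hτ)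
  obtain ⟨r, hr1, hr2⟩ := exists_rat_btwn (show τ < τ + ρ by linarith)
  have hρ1 : ρ ≤ δ / |w| := min_le_left _ _
  have hρ2 : ρ ≤ |τ| := min_le_right _ _
  refine ⟨r, ?_, ?_⟩
  · rcases lt_or_gt_of_ne hτ with h | h
    · have : |τ| = -τ := abs_of_neg h
      have : (r:ℝ) < 0 := by rw [this] at hρ2; linarith
      exact ne_of_lt (by exact_mod_cast this)
    · have : (0:ℝ) < r := lt_trans h hr1
      exact ne_of_gt (by exact_mod_cast this)
  · have heq : (r:ℝ) * w - x₁ = ((r:ℝ) - τ) * w := by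
      rw [hτdef]; field_simp
    rw [heq, abs_mul]
    have h1 : |(r:ℝ) - τ| < ρ := by
      rw [abs_of_pos (by linarith : (0:ℝ) < (r:ℝ) - τ)]; linarith
    calc |(r:ℝ) - τ| * |w| < ρ * |w| := by
            exact mul_lt_mul_of_pos_right h1 hwa
      _ ≤ (δ / |w|) * |w| := mul_le_mul_of_nonneg_right hρ1 (le_of_lt hwa)
      _ = δ := div_mul_cancel₀ _ (ne_of_gt hwa)

end Aux

theorem stmt13 (n : ℕ) (f : ℝ → ℝ) (hf : IsMonomial n f) (hdisc : ¬ Continuous f)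
    (hsup : ∀ M : ℝ, ∃ h : ℝ, h ≠ 0 ∧ M < f h / h ^ n)
    (hinf : ∀ M : ℝ, ∃ h : ℝ, h ≠ 0 ∧ f h / h ^ n < M) :
    closure {p : ℝ × ℝ | p.2 = f p.1} = Set.univ := by
  rw [Set.eq_univ_iff_forall]
  intro p
  rw [Metric.mem_closure_iff]
  intro ε hε
  obtain ⟨x₀, y₀⟩ := p
  -- pick a nonzero base point x₁ near x₀
  obtain ⟨x₁, hx₁0, hx₁⟩ : ∃ x₁ : ℝ, x₁ ≠ 0 ∧ |x₁ - x₀| < ε/2 := by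
    rcases eq_or_ne x₀ 0 with rfl | h
    · exact ⟨ε/4, by positivity, by rw [sub_zero, abs_of_pos (by linarith)]; linarith⟩
    · exact ⟨x₀, h, by simpa using half_pos hε⟩
  set δ : ℝ := min (ε/10) (|x₁|/2) with hδdef
  have hx₁a : 0 < |x₁| := abs_pos.2 hx₁0
  have hδ : 0 < δ := lt_min (by linarith) (by linarith)
  have hδ1 : δ ≤ ε/10 := min_le_left _ _
  have hδ2 : δ ≤ |x₁|/2 := min_le_right _ _
  set b : ℝ := (|x₁|/2)^n with hbdef
  have hb : 0 < b := pow_pos (by linarith) n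
  set M : ℝ := (|y₀|+1)/b with hMdef
  have hM : 0 < M := div_pos (by positivity) hb
  have hMb : M * b = |y₀|+1 := div_mul_cancel₀ _ (ne_of_gt hb)
  obtain ⟨u₀, hu₀0, hu₀⟩ := hsup M
  obtain ⟨v₀, hv₀0, hv₀⟩ := hinf (-M)
  obtain ⟨r, hr0, hru⟩ := rat_mul_dense u₀ x₁ hu₀0 hx₁0 hδ
  obtain ⟨r', hr'0, hrv⟩ := rat_mul_dense v₀ x₁ hv₀0 hx₁0 hδ
  set u : ℝ := (r:ℝ) * u₀ with hudef
  set v : ℝ := (r':ℝ) * v₀ with hvdef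
  have hru' : |u - x₁| < δ := hru
  have hrv' : |v - x₁| < δ := hrv
  have hAu : M < f u / u ^ n := by
    rw [hudef, rat_scale' hf, mul_pow,
      mul_div_mul_left _ _ (pow_ne_zero n hr0)]
    exact hu₀
  have hAv : f v / v ^ n < -M := by
    rw [hvdef, rat_scale' hf, mul_pow,
      mul_div_mul_left _ _ (pow_ne_zero n hr'0)]
    exact hv₀
  -- sign control
  obtain ⟨σ, hσ, hbu, hbv⟩ : ∃ σ : ℝ, (σ = 1 ∨ σ = -1) ∧ b ≤ σ * u^n ∧ b ≤ σ * v^n := by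
    have key : ∀ z : ℝ, |z - x₁| < |x₁|/2 →
        b ≤ (if 0 < x₁ then (1:ℝ) else (-1)^n) * z^n := by
      intro z hz
      rw [abs_lt] at hz
      rcases lt_or_gt_of_ne hx₁0 with h | h
      · rw [if_neg (by linarith)]
        have h1 : |x₁| = -x₁ := abs_of_neg h
        have h2 : z ≤ -(|x₁|/2) := by rw [h1]; linarith [hz.2]
        have h3 : (|x₁|/2) ≤ -z := by linarith
        have h4 : ((-1:ℝ))^n * z^n = (-z)^n := by
          rw [← neg_pow]
        rw [h4, hbdef]
        exact pow_le_pow_left₀ (by linarith) h3 n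
      · rw [if_pos h]
        have h1 : |x₁| = x₁ := abs_of_pos h
        have h2 : (|x₁|/2) ≤ z := by rw [h1]; linarith [hz.1]
        rw [one_mul, hbdef]
        exact pow_le_pow_left₀ (by linarith) h2 n
    refine ⟨if 0 < x₁ then (1:ℝ) else (-1)^n, ?_, ?_, ?_⟩
    · split
      · left; rfl
      · rcases Nat.even_or_odd n with he | ho
        · left; exact he.neg_one_pow
        · right; exact ho.neg_one_pow
    · exact key u (lt_of_lt_of_le hru' hδ2)
    · exact key v (lt_of_lt_of_le hrv' hδ2)
  -- separation: y₀ lies strictly between f u and f v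
  have hy : y₀ ∈ Set.uIcc (f u) (f v) := by
    have hya : y₀ ≤ |y₀| := le_abs_self y₀
    have hya' : -|y₀| ≤ y₀ := neg_abs_le y₀
    have hMu : |y₀|+1 ≤ M * (σ * u^n) := by
      rw [← hMb]; exact mul_le_mul_of_nonneg_left hbu (le_of_lt hM)
    have hMv : |y₀|+1 ≤ M * (σ * v^n) := by
      rw [← hMb]; exact mul_le_mul_of_nonneg_left hbv (le_of_lt hM)
    rcases hσ with rfl | rfl
    · -- u^n, v^n > 0
      rw [one_mul] at hbu hbv hMu hMv
      have hun : 0 < u^n := lt_of_lt_of_le hb hbu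
      have hvn : 0 < v^n := lt_of_lt_of_le hb hbv
      have h1 : M * u^n < f u := (lt_div_iff₀ hun).1 hAu
      have h2 : f v < -M * v^n := (div_lt_iff₀ hvn).1 hAv
      rw [Set.mem_uIcc]
      right
      exact ⟨by linarith, by linarith⟩
    · -- u^n, v^n < 0
      rw [neg_one_mul] at hbu hbv hMu hMv
      have hun : u^n < 0 := by linarith
      have hvn : v^n < 0 := by linarith
      have h1 : f u < M * u^n := (lt_div_iff_of_neg hun).1 hAu
      have h2 : -M * v^n < f v := (div_lt_iff_of_neg hvn).1 hAv
      rw [Set.mem_uIcc]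
      left
      exact ⟨by linarith, by linarith⟩
  -- polynomial along the segment from u to v
  obtain ⟨P, hP⟩ := poly_lemma' hf u (v - u)
  have hP0 : P.eval (0:ℝ) = f u := by
    have := hP 0 le_rfl
    simpa using this
  have hP1 : P.eval (1:ℝ) = f v := by
    have := hP 1 zero_le_one
    push_cast at this
    rw [this]; ring_nf
  -- IVT
  have hcont : Continuous fun x : ℝ => P.eval x := P.continuous
  have hIVT := intermediate_value_uIcc (a := (0:ℝ)) (b := 1)
    (f := fun x => P.eval x) hcont.continuousOn
  have hy' : y₀ ∈ Set.uIcc ((fun x => Polynomial.eval x P) 0) ((fun x => Polynomial.eval x P) 1) := by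
    simpa only [hP0, hP1] using hy
  obtain ⟨t₀, ht₀mem, ht₀⟩ := hIVT hy'
  rw [Set.uIcc_of_le zero_le_one] at ht₀mem
  obtain ⟨ht₀0, ht₀1⟩ := ht₀mem
  -- continuity at t₀
  obtain ⟨δ₂, hδ₂, hδ₂c⟩ := Metric.continuous_iff.1 hcont t₀ ε hε
  set δ₃ : ℝ := min δ₂ 1 with hδ₃def
  have hδ₃ : 0 < δ₃ := lt_min hδ₂ one_pos
  obtain ⟨t, ht1, ht2⟩ := exists_rat_btwn (show t₀ < t₀ + δ₃ by linarith)
  have htnn : 0 ≤ t := by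
    have : (0:ℝ) ≤ (t:ℝ) := le_of_lt (lt_of_le_of_lt ht₀0 ht1)
    exact_mod_cast this
  have hdist : dist ((t:ℝ)) t₀ < δ₂ := by
    rw [Real.dist_eq, abs_of_pos (by linarith)]
    have : δ₃ ≤ δ₂ := min_le_left _ _
    linarith
  have hfx := hP t htnn
  set x : ℝ := u + (t:ℝ) * (v - u) with hxdef
  have hfy : |f x - y₀| < ε := by
    have := hδ₂c _ hdist
    rw [hfx] at this
    rw [Real.dist_eq] at this
    have ht₀' : Polynomial.eval t₀ P = y₀ := ht₀
    rw [ht₀'] at this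
    exact this
  have hxb : |x - x₀| < ε := by
    have htb : (t:ℝ) ≤ 2 := by
      have : δ₃ ≤ 1 := min_le_right _ _
      linarith
    have htnn' : (0:ℝ) ≤ (t:ℝ) := by exact_mod_cast htnn
    have hvu : |v - u| ≤ |v - x₁| + |x₁ - u| := abs_sub_le v x₁ u
    have h5 : |x₁ - u| = |u - x₁| := abs_sub_comm x₁ u
    have h6 : |(t:ℝ) * (v - u)| ≤ 2 * |v - u| := by
      rw [abs_mul, abs_of_nonneg htnn']
      exact mul_le_mul_of_nonneg_right htb (abs_nonneg _)
    have h7 : |x - x₁| ≤ |u - x₁| + |(t:ℝ)*(v-u)| := by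
      have : x - x₁ = (u - x₁) + (t:ℝ)*(v-u) := by rw [hxdef]; ring
      rw [this]
      exact abs_add_le _ _
    have h8 : |x - x₀| ≤ |x - x₁| + |x₁ - x₀| := abs_sub_le x x₁ x₀
    linarith
  refine ⟨(x, f x), rfl, ?_⟩
  rw [Prod.dist_eq]
  rw [max_lt_iff]
  constructor
  · rw [Real.dist_eq, abs_sub_comm]; exact hxb
  · rw [Real.dist_eq, abs_sub_comm]; exact hfy
end

section
/- Let n be odd, f a discontinuous n-monomial, A(h) = f(h)/h^n for h ≠ 0, with sup_{h≠0} A(h) = +∞ and β = inf_{h≠0} A(h) ∈ ℝ. Then the closure of the graph of f equals {(x,y) : x ≤ 0 and y ≤ β x^n} ∪ {(x,y) : x ≥ 0 and y ≥ β x^n}. -/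
open Polynomial

noncomputable def polyD_s15 (P : ℝ[X]) : ℝ[X] := P.comp (X + C 1) - P

def zD (u : ℤ → ℝ) : ℤ → ℝ := fun m => u (m + 1) - u m

lemma polyD_eval (P : ℝ[X]) (x : ℝ) : (polyD_s15 P).eval x = P.eval (x + 1) - P.eval x := by
  simp [polyD_s15]

lemma polyD_eq_taylor (P : ℝ[X]) : polyD_s15 P = taylor 1 P - P := rfl

lemma hasse_high (P : ℝ[X]) (j : ℕ) (h : P.natDegree ≤ j) :
    P.hasseDeriv j = C (P.coeff j) := by
  ext m
  rw [Polynomial.hasseDeriv_coeff, Polynomial.coeff_C]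
  rcases Nat.eq_zero_or_pos m with hm | hm
  · simp [hm]
  · have : P.coeff (m + j) = 0 := by
      apply Polynomial.coeff_eq_zero_of_natDegree_lt
      omega
    simp [this, Nat.pos_iff_ne_zero.mp hm]

lemma polyD_coeff (P : ℝ[X]) (k : ℕ) (hP : P.natDegree ≤ k + 1) :
    (polyD_s15 P).coeff k = (k + 1 : ℝ) * P.coeff (k + 1) := by
  rw [polyD_eq_taylor, Polynomial.coeff_sub, Polynomial.taylor_coeff]
  have hdeg : (P.hasseDeriv k).natDegree < 2 := by
    have := Polynomial.natDegree_hasseDeriv_le P k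
    omega
  rw [Polynomial.eval_eq_sum_range' hdeg]
  rw [Finset.sum_range_succ, Finset.sum_range_succ]
  simp only [Finset.sum_range_zero, Polynomial.hasseDeriv_coeff, one_pow, mul_one, zero_add]
  have h1 : k.choose k = 1 := Nat.choose_self k
  have h2 : (1 + k).choose k = k + 1 := by
    rw [Nat.add_comm]; exact Nat.choose_succ_self_right k
  rw [h1, h2, Nat.add_comm 1 k]
  push_cast
  ring

lemma polyD_natDegree (P : ℝ[X]) (k : ℕ) (hP : P.natDegree ≤ k + 1) :
    (polyD_s15 P).natDegree ≤ k := by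
  rw [Polynomial.natDegree_le_iff_coeff_eq_zero]
  intro j hj
  rw [polyD_eq_taylor, Polynomial.coeff_sub, Polynomial.taylor_coeff,
    hasse_high P j (le_trans hP hj), Polynomial.eval_C, sub_self]

lemma polyD_C (c : ℝ) : polyD_s15 (C c) = 0 := by simp [polyD_s15]

lemma polyD_iter_const (k : ℕ) : ∀ P : ℝ[X], P.natDegree ≤ k →
    polyD_s15^[k] P = C ((k.factorial : ℝ) * P.coeff k) := by
  induction k with
  | zero =>
    intro P hP
    simpa using (Polynomial.eq_C_of_natDegree_le_zero hP)
  | succ k ih =>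
    intro P hP
    rw [Function.iterate_succ_apply, ih (polyD_s15 P) (polyD_natDegree P k hP),
      polyD_coeff P k hP]
    congr 1
    rw [Nat.factorial_succ]
    push_cast
    ring

lemma polyD_iter_zero (k : ℕ) (P : ℝ[X]) (hP : P.natDegree ≤ k) :
    polyD_s15^[k + 1] P = 0 := by
  rw [Function.iterate_succ_apply', polyD_iter_const k P hP, polyD_C]

lemma zD_const (v : ℤ → ℝ) (h : ∀ m, zD v m = 0) : ∀ m, v m = v 0 := by
  have step : ∀ m, v (m + 1) = v m := by
    intro m; have := h m; simp [zD, sub_eq_zero] at this; exact this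
  intro m
  induction m using Int.induction_on with
  | zero => rfl
  | succ i ih => rw [step i]; exact ih
  | pred i ih =>
    have h2 := step (-(i : ℤ) - 1)
    have h3 : (-(i : ℤ) - 1) + 1 = -(i : ℤ) := by ring
    rw [h3] at h2
    rw [← h2]
    exact ih

lemma zD_vanish (k : ℕ) : ∀ (v : ℤ → ℝ) (j : ℤ), (∀ i, j ≤ i → i ≤ j + k → v i = 0) →
    zD^[k] v j = 0 := by
  induction k with
  | zero => intro v j h; exact h j le_rfl (by omega)
  | succ k ih =>
    intro v j h
    rw [Function.iterate_succ_apply]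
    apply ih
    intro i h1 h2
    simp only [zD]
    rw [h i h1 (by omega), h (i + 1) (by omega) (by omega), sub_self]

lemma zD_sub (k : ℕ) : ∀ (u v : ℤ → ℝ) (m : ℤ),
    zD^[k] (fun i => u i - v i) m = zD^[k] u m - zD^[k] v m := by
  induction k with
  | zero => intro u v m; rfl
  | succ k ih =>
    intro u v m
    rw [Function.iterate_succ_apply, Function.iterate_succ_apply,
      Function.iterate_succ_apply]
    have : zD (fun i => u i - v i) = fun i => zD u i - zD v i := by
      funext i; simp [zD]; ring
    rw [this, ih]

lemma zD_zero_of_window (n : ℕ) (w : ℤ → ℝ)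
    (h1 : ∀ m, zD^[n + 1] w m = 0)
    (h0 : ∀ i : ℤ, 0 ≤ i → i ≤ (n : ℤ) → w i = 0) : ∀ m, w m = 0 := by
  have key : ∀ k : ℕ, k ≤ n + 1 → ∀ m, zD^[n + 1 - k] w m = 0 := by
    intro k
    induction k with
    | zero => intro _ m; simpa using h1 m
    | succ k ih =>
      intro hk m
      have hk' : k ≤ n + 1 := by omega
      have hnk : n + 1 - k = (n - k) + 1 := by omega
      have hstep : ∀ m, zD (zD^[n - k] w) m = 0 := by
        intro m
        have := ih hk' m
        rwa [hnk, Function.iterate_succ_apply'] at this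
      have hconst := zD_const _ hstep
      have hzero : zD^[n - k] w 0 = 0 := by
        apply zD_vanish
        intro i hi1 hi2
        apply h0 i hi1
        omega
      have : n + 1 - (k + 1) = n - k := by omega
      rw [this]
      rw [hconst m, hzero]
  intro m
  have := key (n + 1) le_rfl m
  simpa using this

/-- bridge between real differences and integer-indexed differences -/
lemma zD_bridge (k : ℕ) : ∀ (g : ℝ → ℝ) (a b : ℝ) (m : ℤ),
    zD^[k] (fun i : ℤ => g (b + i * a)) m = ((fdiff a)^[k] g) (b + m * a) := by
  induction k with
  | zero => intro g a b m; rfl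
  | succ k ih =>
    intro g a b m
    rw [Function.iterate_succ_apply, Function.iterate_succ_apply]
    have : zD (fun i : ℤ => g (b + i * a)) = fun i : ℤ => (fdiff a g) (b + i * a) := by
      funext i
      simp only [zD, fdiff]
      have : b + (i + 1 : ℤ) * a = b + i * a + a := by push_cast; ring
      rw [this]
    rw [this, ih]

lemma zD_poly_bridge (k : ℕ) : ∀ (P : ℝ[X]) (m : ℤ),
    zD^[k] (fun i : ℤ => P.eval (i : ℝ)) m = (polyD_s15^[k] P).eval (m : ℝ) := by
  induction k with
  | zero => intro P m; rfl
  | succ k ih =>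
    intro P m
    rw [Function.iterate_succ_apply, Function.iterate_succ_apply]
    have : zD (fun i : ℤ => P.eval (i : ℝ)) = fun i : ℤ => (polyD_s15 P).eval (i : ℝ) := by
      funext i
      rw [polyD_eval]
      simp only [zD]
      have : ((i + 1 : ℤ) : ℝ) = (i : ℝ) + 1 := by push_cast; ring
      rw [this]
    rw [this, ih]

lemma fd_const {n : ℕ} {f : ℝ → ℝ} (hf : IsMonomial n f) (h x : ℝ) :
    ((fdiff h)^[n] f) x = (n.factorial : ℝ) * f h := by
  have := hf x h
  have hn0 : (n.factorial : ℝ) ≠ 0 := Nat.cast_ne_zero.mpr (Nat.factorial_ne_zero n)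
  field_simp at this
  linarith [this]

lemma fd_succ_zero {n : ℕ} {f : ℝ → ℝ} (hf : IsMonomial n f) (h x : ℝ) :
    ((fdiff h)^[n + 1] f) x = 0 := by
  rw [Function.iterate_succ_apply']
  show ((fdiff h)^[n] f) (x + h) - ((fdiff h)^[n] f) x = 0
  rw [fd_const hf, fd_const hf, sub_self]

lemma line_poly_int (n : ℕ) (f : ℝ → ℝ) (hf : IsMonomial n f) (a b : ℝ) :
    ∃ P : ℝ[X], P.natDegree ≤ n ∧ (∀ m : ℤ, f (b + m * a) = P.eval (m : ℝ)) ∧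
      P.coeff n = f a := by
  classical
  set u : ℤ → ℝ := fun m => f (b + m * a) with hu
  set P : ℝ[X] := Lagrange.interpolate (Finset.range (n + 1)) (fun k : ℕ => (k : ℝ))
      (fun k : ℕ => u k) with hP2
  have hinj : Set.InjOn (fun k : ℕ => (k : ℝ)) (Finset.range (n + 1)) :=
    fun x _ y _ hxy => Nat.cast_injective hxy
  have hdeg : P.natDegree ≤ n := by
    have := Lagrange.degree_interpolate_lt (s := Finset.range (n + 1))
      (r := fun k : ℕ => u k) hinj
    rw [Finset.card_range] at this
    by_cases hP0 : P = 0
    · simp [hP0]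
    · have h2 := (Polynomial.natDegree_lt_iff_degree_lt hP0).mpr this
      omega
  have hnode : ∀ k : ℕ, k ≤ n → P.eval (k : ℝ) = u k := by
    intro k hk
    exact Lagrange.eval_interpolate_at_node _ hinj (Finset.mem_range.mpr (by omega))
  have hall : ∀ m : ℤ, u m = P.eval (m : ℝ) := by
    set w : ℤ → ℝ := fun m => u m - P.eval (m : ℝ) with hw2
    have hw0 : ∀ m, w m = 0 := by
      apply zD_zero_of_window n
      · intro m
        have h1 : zD^[n + 1] w m = zD^[n + 1] u m - zD^[n + 1] (fun i : ℤ => P.eval (i : ℝ)) m :=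
          zD_sub (n + 1) u _ m
        have h2 : zD^[n + 1] u m = 0 := by
          rw [hu, zD_bridge]; exact fd_succ_zero hf a _
        have h3 : zD^[n + 1] (fun i : ℤ => P.eval (i : ℝ)) m = 0 := by
          rw [zD_poly_bridge, polyD_iter_zero n P hdeg]; simp
        rw [h1, h2, h3, sub_self]
      · intro i hi1 hi2
        show u i - P.eval (i : ℝ) = 0
        lift i to ℕ using hi1 with k
        have hk : k ≤ n := by exact_mod_cast hi2
        simp only [Int.cast_natCast]
        rw [hnode k hk, sub_self]
    intro m
    have := hw0 m
    have h2 : u m - P.eval (m : ℝ) = 0 := this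
    linarith
  refine ⟨P, hdeg, ?_, ?_⟩
  · intro m; exact hall m
  · -- coefficient extraction
    have h1 : zD^[n] u 0 = (n.factorial : ℝ) * f a := by
      rw [hu, zD_bridge]
      have : b + (0 : ℤ) * a = b := by push_cast; ring
      rw [this, fd_const hf]
    have h2 : zD^[n] u 0 = (polyD_s15^[n] P).eval ((0 : ℤ) : ℝ) := by
      have : u = fun i : ℤ => P.eval (i : ℝ) := funext hall
      rw [this, zD_poly_bridge]
    rw [polyD_iter_const n P hdeg] at h2
    simp only [Int.cast_zero, Polynomial.eval_C] at h2
    have hn0 : (n.factorial : ℝ) ≠ 0 := Nat.cast_ne_zero.mpr (Nat.factorial_ne_zero n)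
    have h3 : (n.factorial : ℝ) * f a = (n.factorial : ℝ) * P.coeff n := h1.symm.trans h2
    exact (mul_left_cancel₀ hn0 h3).symm

lemma poly_eq_on_int (P Q : ℝ[X]) (h : ∀ m : ℤ, P.eval (m : ℝ) = Q.eval (m : ℝ)) : P = Q := by
  have : P - Q = 0 := by
    apply Polynomial.eq_zero_of_infinite_isRoot
    apply Set.Infinite.mono (s := Set.range (fun m : ℤ => (m : ℝ)))
    · rintro x ⟨m, rfl⟩
      simp [Polynomial.IsRoot, h m]
    · exact Set.infinite_range_of_injective Int.cast_injective
  exact sub_eq_zero.mp this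

lemma poly_eq_on_rat (P Q : ℝ[X]) (h : ∀ q : ℚ, P.eval (q : ℝ) = Q.eval (q : ℝ)) : P = Q := by
  have : P - Q = 0 := by
    apply Polynomial.eq_zero_of_infinite_isRoot
    apply Set.Infinite.mono (s := Set.range (fun q : ℚ => (q : ℝ)))
    · rintro x ⟨q, rfl⟩
      simp [Polynomial.IsRoot, h q]
    · exact Set.infinite_range_of_injective Rat.cast_injective
  exact sub_eq_zero.mp this

lemma coeff_comp_C_mul_X (P : ℝ[X]) (c : ℝ) (k : ℕ) :
    (P.comp (C c * X)).coeff k = P.coeff k * c ^ k := by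
  induction P using Polynomial.induction_on' with
  | add p q hp hq => simp [Polynomial.add_comp, hp, hq, add_mul]
  | monomial i r =>
    rw [Polynomial.monomial_comp, mul_pow, ← Polynomial.C_pow, ← mul_assoc, ← Polynomial.C_mul]
    simp only [Polynomial.coeff_C_mul, Polynomial.coeff_X_pow, Polynomial.coeff_monomial]
    rcases eq_or_ne k i with h | h
    · subst h; simp [mul_comm]
    · simp [h, Ne.symm h]

lemma f_zero {n : ℕ} {f : ℝ → ℝ} (hn : n ≠ 0) (hf : IsMonomial n f) : f 0 = 0 := by
  obtain ⟨k, rfl⟩ : ∃ k, n = k + 1 := ⟨n - 1, by omega⟩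
  have h1 : fdiff 0 ((fdiff (0:ℝ))^[k] f) = fun _ => 0 := by
    funext x
    simp [fdiff]
  have := hf 0 0
  rw [Function.iterate_succ_apply', h1] at this
  simpa using this.symm

lemma line_poly_rat (n : ℕ) (f : ℝ → ℝ) (hf : IsMonomial n f) (a b : ℝ) :
    ∃ P : ℝ[X], P.natDegree ≤ n ∧ (∀ q : ℚ, f (b + q * a) = P.eval (q : ℝ)) ∧
      P.coeff n = f a := by
  obtain ⟨P, hdeg, hint, hcoeff⟩ := line_poly_int n f hf a b
  refine ⟨P, hdeg, ?_, hcoeff⟩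
  intro q
  set d : ℕ := q.den with hd
  have hd0 : (d : ℝ) ≠ 0 := Nat.cast_ne_zero.mpr q.den_ne_zero
  obtain ⟨Pd, hdegd, hintd, _⟩ := line_poly_int n f hf (a / d) b
  have hcomp : Pd.comp (C (d : ℝ) * X) = P := by
    apply poly_eq_on_int
    intro m
    rw [Polynomial.eval_comp]
    simp only [Polynomial.eval_mul, Polynomial.eval_C, Polynomial.eval_X]
    have h1 : (d : ℝ) * (m : ℝ) = ((d * m : ℤ) : ℝ) := by push_cast; ring
    rw [h1, ← hintd (d * m), ← hint m]
    congr 1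
    push_cast
    field_simp
  have hqa : (q : ℝ) * a = (q.num : ℝ) * (a / d) := by
    rw [Rat.cast_def]
    field_simp
    rw [hd]; ring
  have hnum : ((q.num : ℤ) : ℝ) = (d : ℝ) * (q : ℝ) := by
    rw [Rat.cast_def]
    field_simp
    rw [hd]
  rw [hqa, hintd q.num, hnum, ← hcomp, Polynomial.eval_comp]
  simp

lemma f_hom (n : ℕ) (f : ℝ → ℝ) (hn : n ≠ 0) (hf : IsMonomial n f) (h : ℝ) (q : ℚ) :
    f ((q : ℝ) * h) = (q : ℝ) ^ n * f h := by
  obtain ⟨P, hdeg, hrat, hcoeff⟩ := line_poly_rat n f hf h 0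
  obtain ⟨Q, hdegQ, hratQ, hcoeffQ⟩ := line_poly_rat n f hf ((q : ℝ) * h) 0
  have hQP : Q = P.comp (C (q : ℝ) * X) := by
    apply poly_eq_on_rat
    intro r
    rw [← hratQ r, Polynomial.eval_comp]
    simp only [Polynomial.eval_mul, Polynomial.eval_C, Polynomial.eval_X]
    have h2 : (r : ℝ) * (q : ℝ) = ((r * q : ℚ) : ℝ) := by push_cast; ring
    rw [mul_comm (q : ℝ) (r : ℝ), h2, ← hrat (r * q)]
    congr 1
    push_cast
    ring
  have := hcoeffQ
  rw [hQP, coeff_comp_C_mul_X, hcoeff] at this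
  rw [← this]
  ring

lemma curve_mem (n : ℕ) (f : ℝ → ℝ) (hn : n ≠ 0) (hf : IsMonomial n f)
    (h : ℝ) (hh : h ≠ 0) (s : ℝ) :
    (s * h, f h / h ^ n * (s * h) ^ n) ∈ closure {p : ℝ × ℝ | p.2 = f p.1} := by
  set g : ℝ → ℝ × ℝ := fun t => (t * h, f h / h ^ n * (t * h) ^ n) with hg
  have hgc : Continuous g := by
    apply Continuous.prodMk
    · exact continuous_id.mul continuous_const
    · exact continuous_const.mul ((continuous_id.mul continuous_const).pow n)
  have hsub : g '' Set.range (fun q : ℚ => (q : ℝ)) ⊆ {p : ℝ × ℝ | p.2 = f p.1} := by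
    rintro _ ⟨_, ⟨q, rfl⟩, rfl⟩
    show f h / h ^ n * ((q : ℝ) * h) ^ n = f ((q : ℝ) * h)
    rw [f_hom n f hn hf h q, mul_pow]
    have hhn : (h : ℝ) ^ n ≠ 0 := pow_ne_zero n hh
    field_simp
  have hs : s ∈ closure (Set.range (fun q : ℚ => (q : ℝ))) := by
    rw [Rat.denseRange_cast.closure_eq]
    trivial
  have h1 : g s ∈ g '' closure (Set.range (fun q : ℚ => (q : ℝ))) := ⟨s, hs, rfl⟩
  have h2 := image_closure_subset_closure_image (f := g) (s := Set.range (fun q : ℚ => (q : ℝ))) hgc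
  exact closure_mono hsub (h2 h1)

lemma point_mem (n : ℕ) (f : ℝ → ℝ) (hn : n ≠ 0) (hf : IsMonomial n f)
    (x : ℝ) (hx : x ≠ 0) (v : ℝ)
    (hv : v ∈ closure {y : ℝ | ∃ h : ℝ, h ≠ 0 ∧ y = f h / h ^ n}) :
    (x, v * x ^ n) ∈ closure {p : ℝ × ℝ | p.2 = f p.1} := by
  set φ : ℝ → ℝ × ℝ := fun w => (x, w * x ^ n) with hφ
  have hφc : Continuous φ := by
    apply Continuous.prodMk continuous_const
    exact continuous_id.mul continuous_const
  have hsub : φ '' {y : ℝ | ∃ h : ℝ, h ≠ 0 ∧ y = f h / h ^ n} ⊆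
      closure {p : ℝ × ℝ | p.2 = f p.1} := by
    rintro _ ⟨_, ⟨h, hh, rfl⟩, rfl⟩
    have := curve_mem n f hn hf h hh (x / h)
    rw [div_mul_cancel₀ x hh] at this
    exact this
  have h1 : φ v ∈ φ '' closure {y : ℝ | ∃ h : ℝ, h ≠ 0 ∧ y = f h / h ^ n} := ⟨v, hv, rfl⟩
  have h2 := image_closure_subset_closure_image
    (f := φ) (s := {y : ℝ | ∃ h : ℝ, h ≠ 0 ∧ y = f h / h ^ n}) hφc
  have h3 := closure_mono hsub (h2 h1)
  rwa [closure_closure] at h3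

lemma axis_mem (n : ℕ) (f : ℝ → ℝ) (hn : Odd n) (hf : IsMonomial n f)
    (hsup : ∀ M : ℝ, ∃ h : ℝ, h ≠ 0 ∧ M < f h / h ^ n) (y : ℝ) :
    ((0 : ℝ), y) ∈ closure {p : ℝ × ℝ | p.2 = f p.1} := by
  have hnne : n ≠ 0 := by rintro rfl; simp at hn
  rw [← closure_closure (s := {p : ℝ × ℝ | p.2 = f p.1})]
  rw [Metric.mem_closure_iff]
  intro ε hε
  obtain ⟨h, hh, hA⟩ := hsup (max 0 (|y| / (ε / 2) ^ n))
  set A := f h / h ^ n with hAdef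
  have hε2 : (0 : ℝ) < (ε / 2) ^ n := pow_pos (by linarith) n
  have hA0 : 0 < A := lt_of_le_of_lt (le_max_left _ _) hA
  have hAy : |y| < A * (ε / 2) ^ n := by
    have h1 : |y| / (ε / 2) ^ n < A := lt_of_le_of_lt (le_max_right _ _) hA
    calc |y| = |y| / (ε / 2) ^ n * (ε / 2) ^ n := by field_simp
    _ < A * (ε / 2) ^ n := mul_lt_mul_of_pos_right h1 hε2
  have hcont : ContinuousOn (fun z : ℝ => A * z ^ n) (Set.uIcc (-(ε / 2)) (ε / 2)) :=
    (continuous_const.mul (continuous_id.pow n)).continuousOn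
  have hy : y ∈ Set.uIcc (A * (-(ε / 2)) ^ n) (A * (ε / 2) ^ n) := by
    rw [hn.neg_pow, Set.mem_uIcc]
    left
    constructor
    · have := abs_le.mp (le_of_lt hAy)
      linarith [this.1]
    · have := abs_le.mp (le_of_lt hAy)
      linarith [this.2]
  obtain ⟨z, hz, hzy⟩ := intermediate_value_uIcc hcont hy
  refine ⟨(z, y), ?_, ?_⟩
  · have hc := curve_mem n f hnne hf h hh (z / h)
    rw [div_mul_cancel₀ z hh] at hc
    rw [← hAdef] at hc
    show (z, y) ∈ closure {p : ℝ × ℝ | p.2 = f p.1}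
    have : A * z ^ n = y := hzy
    rwa [this] at hc
  · have hzb : |z| ≤ ε / 2 := by
      rw [Set.uIcc_of_le (by linarith : -(ε / 2) ≤ ε / 2)] at hz
      exact abs_le.mpr ⟨hz.1, hz.2⟩
    rw [Prod.dist_eq]
    simp only [Real.dist_eq]
    apply max_lt
    · rw [abs_sub_comm]
      calc |z - 0| = |z| := by rw [sub_zero]
      _ ≤ ε / 2 := hzb
      _ < ε := by linarith
    · simpa using hε

lemma A_abs (n : ℕ) (f : ℝ → ℝ) (hn : Odd n) (hf : IsMonomial n f) (h : ℝ) (hh : h ≠ 0) :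
    f |h| / |h| ^ n = f h / h ^ n := by
  have hnne : n ≠ 0 := by rintro rfl; simp at hn
  rcases abs_choice h with habs | habs
  · rw [habs]
  · rw [habs]
    have h1 : -h = ((-1 : ℚ) : ℝ) * h := by push_cast; ring
    rw [h1, f_hom n f hnne hf h (-1)]
    have h2 : ((-1 : ℚ) : ℝ) ^ n = -1 := by
      push_cast
      exact hn.neg_one_pow
    rw [h2]
    have h3 : (((-1 : ℚ) : ℝ) * h) ^ n = -(h ^ n) := by
      push_cast
      rw [neg_one_mul, hn.neg_pow]
    rw [h3]
    rw [neg_one_mul, neg_div_neg_eq]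

lemma interval_mem (n : ℕ) (f : ℝ → ℝ) (hn : n ≠ 0) (hf : IsMonomial n f)
    (a b : ℝ) (ha : 0 < a) (hb : 0 < b) (w : ℝ)
    (hw : w ∈ Set.uIcc (f b / b ^ n) (f a / a ^ n)) :
    w ∈ closure {y : ℝ | ∃ h : ℝ, h ≠ 0 ∧ y = f h / h ^ n} := by
  obtain ⟨P, hdeg, hrat, _⟩ := line_poly_rat n f hf (a - b) b
  set H : ℝ → ℝ := fun t => P.eval t / (b + t * (a - b)) ^ n with hH
  have hden : ∀ t ∈ Set.Icc (0 : ℝ) 1, 0 < b + t * (a - b) := by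
    rintro t ⟨h1, h2⟩
    rcases h1.eq_or_lt with rfl | h1'
    · simpa using hb
    · nlinarith [mul_pos h1' ha, mul_nonneg (sub_nonneg.mpr h2) hb.le]
  have hcont : ContinuousOn H (Set.Icc 0 1) := by
    apply ContinuousOn.div
    · exact (Polynomial.continuous_aeval P).continuousOn
    · exact ((continuous_const.add (continuous_id.mul continuous_const)).pow n).continuousOn
    · intro t ht
      exact pow_ne_zero n (ne_of_gt (hden t ht))
  have hH0 : H 0 = f b / b ^ n := by
    have h0 := hrat 0
    simp only [Rat.cast_zero, zero_mul, add_zero] at h0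
    show P.eval 0 / (b + 0 * (a - b)) ^ n = f b / b ^ n
    rw [zero_mul, add_zero, ← h0]
  have hH1 : H 1 = f a / a ^ n := by
    have h1 := hrat 1
    simp only [Rat.cast_one, one_mul] at h1
    show P.eval 1 / (b + 1 * (a - b)) ^ n = f a / a ^ n
    have e1 : b + 1 * (a - b) = a := by ring
    have e2 : b + (a - b) = a := by ring
    rw [e2] at h1
    rw [e1, ← h1]
  have huIcc : Set.uIcc (0 : ℝ) 1 = Set.Icc 0 1 := Set.uIcc_of_le zero_le_one
  obtain ⟨t, ht, hHt⟩ := intermediate_value_uIcc (by rw [huIcc]; exact hcont)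
    (by rw [hH0, hH1]; exact hw)
  rw [huIcc] at ht
  set S : Set ℝ := Set.Icc (0 : ℝ) 1 ∩ Set.range (fun q : ℚ => (q : ℝ)) with hS
  have hclos : Set.Icc (0 : ℝ) 1 ⊆ closure S := by
    intro x hx
    rw [Metric.mem_closure_iff]
    intro δ hδ
    rcases eq_or_lt_of_le hx.2 with h1 | h1
    · exact ⟨1, ⟨Set.mem_Icc.mpr ⟨zero_le_one, le_rfl⟩, ⟨1, by push_cast; rfl⟩⟩,
        by rw [h1]; simpa using hδ⟩
    · have hlt : x < min 1 (x + δ) := lt_min h1 (by linarith)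
      obtain ⟨q, hq1, hq2⟩ := exists_rat_btwn hlt
      refine ⟨(q : ℝ), ⟨Set.mem_Icc.mpr ⟨le_trans hx.1 (le_of_lt hq1),
        le_trans (le_of_lt hq2) (min_le_left _ _)⟩, ⟨q, rfl⟩⟩, ?_⟩
      rw [Real.dist_eq, abs_sub_comm, abs_of_pos (by linarith)]
      have := lt_of_lt_of_le hq2 (min_le_right _ _)
      linarith
  have hclosS : closure S ⊆ Set.Icc (0 : ℝ) 1 := by
    rw [← (isClosed_Icc : IsClosed (Set.Icc (0:ℝ) 1)).closure_eq]
    exact closure_mono Set.inter_subset_left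
  have hcont2 : ContinuousOn H (closure S) := hcont.mono hclosS
  have himg : H '' S ⊆ {y : ℝ | ∃ h : ℝ, h ≠ 0 ∧ y = f h / h ^ n} := by
    rintro _ ⟨_, ⟨hmem, ⟨q, rfl⟩⟩, rfl⟩
    refine ⟨b + (q : ℝ) * (a - b), ne_of_gt (hden _ hmem), ?_⟩
    show P.eval (q : ℝ) / (b + (q : ℝ) * (a - b)) ^ n = f (b + (q : ℝ) * (a - b)) / _ ^ n
    rw [← hrat q]
  have h1 : H t ∈ H '' closure S := ⟨t, hclos ht, rfl⟩
  have h2 := hcont2.image_closure h1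
  rw [← hHt]
  exact closure_mono himg h2

lemma R_Ici (n : ℕ) (f : ℝ → ℝ) (hn : Odd n) (hf : IsMonomial n f)
    (hsup : ∀ M : ℝ, ∃ h : ℝ, h ≠ 0 ∧ M < f h / h ^ n)
    (β : ℝ) (hβ : IsGLB {y : ℝ | ∃ h : ℝ, h ≠ 0 ∧ y = f h / h ^ n} β) :
    Set.Ici β ⊆ closure {y : ℝ | ∃ h : ℝ, h ≠ 0 ∧ y = f h / h ^ n} := by
  have hnne : n ≠ 0 := by rintro rfl; simp at hn
  have hne : {y : ℝ | ∃ h : ℝ, h ≠ 0 ∧ y = f h / h ^ n}.Nonempty := by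
    obtain ⟨h, hh, _⟩ := hsup 0
    exact ⟨f h / h ^ n, h, hh, rfl⟩
  intro w hw
  rcases eq_or_lt_of_le (Set.mem_Ici.mp hw) with rfl | hlt
  · exact hβ.mem_closure hne
  · have hv : ∃ v ∈ {y : ℝ | ∃ h : ℝ, h ≠ 0 ∧ y = f h / h ^ n}, v < w := by
      by_contra hcon
      push_neg at hcon
      have : w ≤ β := hβ.2 hcon
      linarith
    obtain ⟨v, hvR, hvw⟩ := hv
    obtain ⟨h1, hh1, rfl⟩ := hvR
    obtain ⟨h2, hh2, huw⟩ := hsup w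
    have hm : w ∈ Set.uIcc (f |h1| / |h1| ^ n) (f |h2| / |h2| ^ n) := by
      rw [A_abs n f hn hf h1 hh1, A_abs n f hn hf h2 hh2, Set.mem_uIcc]
      left
      exact ⟨le_of_lt hvw, le_of_lt huw⟩
    exact interval_mem n f hnne hf |h2| |h1| (abs_pos.mpr hh2) (abs_pos.mpr hh1) w hm

theorem stmt15 (n : ℕ) (hn : Odd n) (f : ℝ → ℝ) (hf : IsMonomial n f)
    (hdisc : ¬ Continuous f)
    (hsup : ∀ M : ℝ, ∃ h : ℝ, h ≠ 0 ∧ M < f h / h ^ n)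
    (β : ℝ) (hβ : IsGLB {y : ℝ | ∃ h : ℝ, h ≠ 0 ∧ y = f h / h ^ n} β) :
    closure {p : ℝ × ℝ | p.2 = f p.1} =
      {p : ℝ × ℝ | p.1 ≤ 0 ∧ p.2 ≤ β * p.1 ^ n} ∪
      {p : ℝ × ℝ | 0 ≤ p.1 ∧ β * p.1 ^ n ≤ p.2} := by
  have hnne : n ≠ 0 := by rintro rfl; simp at hn
  apply Set.Subset.antisymm
  · -- closure of graph ⊆ RHS
    apply closure_minimal
    · rintro ⟨x, y⟩ hxy
      simp only [Set.mem_setOf_eq] at hxy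
      subst hxy
      rcases lt_trichotomy x 0 with hx | hx | hx
      · left
        refine ⟨le_of_lt hx, ?_⟩
        have hmem : f x / x ^ n ∈ {y : ℝ | ∃ h : ℝ, h ≠ 0 ∧ y = f h / h ^ n} :=
          ⟨x, ne_of_lt hx, rfl⟩
        have hβle : β ≤ f x / x ^ n := hβ.1 hmem
        have hxn : x ^ n < 0 := hn.pow_neg hx
        exact (le_div_iff_of_neg hxn).mp hβle
      · subst hx
        right
        refine ⟨le_rfl, ?_⟩
        simp only [Set.mem_setOf_eq]
        rw [zero_pow hnne, mul_zero, f_zero hnne hf]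
      · right
        refine ⟨le_of_lt hx, ?_⟩
        have hmem : f x / x ^ n ∈ {y : ℝ | ∃ h : ℝ, h ≠ 0 ∧ y = f h / h ^ n} :=
          ⟨x, ne_of_gt hx, rfl⟩
        have hβle : β ≤ f x / x ^ n := hβ.1 hmem
        have hxn : 0 < x ^ n := pow_pos hx n
        exact (le_div_iff₀ hxn).mp hβle
    · -- RHS is closed
      apply IsClosed.union
      · exact (isClosed_le continuous_fst continuous_const).inter
          (isClosed_le continuous_snd (continuous_const.mul (continuous_fst.pow n)))
      · exact (isClosed_le continuous_const continuous_fst).inter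
          (isClosed_le (continuous_const.mul (continuous_fst.pow n)) continuous_snd)
  · -- RHS ⊆ closure of graph
    rintro ⟨x, y⟩ hxy
    rcases eq_or_ne x 0 with rfl | hx
    · exact axis_mem n f hn hf hsup y
    · have hIci := R_Ici n f hn hf hsup β hβ
      rcases hxy with ⟨hx1, hy⟩ | ⟨hx1, hy⟩
      ·
        have hxlt : x < 0 := lt_of_le_of_ne hx1 hx
        have hxn : x ^ n < 0 := hn.pow_neg hxlt
        have hv : β ≤ y / x ^ n := (le_div_iff_of_neg hxn).mpr hy
        have hclo := hIci hv
        have := point_mem n f hnne hf x hx (y / x ^ n) hclo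
        rwa [div_mul_cancel₀ y (ne_of_lt hxn)] at this
      · have hxgt : (0 : ℝ) < x := lt_of_le_of_ne hx1 (Ne.symm hx)
        have hxn : 0 < x ^ n := pow_pos hxgt n
        have hv : β ≤ y / x ^ n := (le_div_iff₀ hxn).mpr hy
        have hclo := hIci hv
        have := point_mem n f hnne hf x hx (y / x ^ n) hclo
        rwa [div_mul_cancel₀ y (ne_of_gt hxn)] at this
end
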